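/- arXiv:1301.3035 — 6 statements merged into one kernel-verified Lean document; each statement's English description precedes it below -/
import Mathlib

section
/- Fix natural numbers k ≥ 1 and n ≥ 1. Let P be the set of pairs (b, a) of functions b, a : Fin k → Fin (n+1) such that both b and a are weakly increasing (monotone) and b i < a i for every i : Fin k. Then (k+1) · |P| = C(n+k, k) · C(n+k-1, k), i.e. the number of parallelogram polyominoes of width k+1 and height n equals (1/(k+1))·C(n+k,k)·C(n+k-1,k). -/
namespace PP

attribute [local instance] Classical.propDecidable

/-- Strictly increasing `k`-tuples of naturals below `m`. -/
def SS (k m : ℕ) : Type := {f : Fin k → ℕ // StrictMono f ∧ ∀ i, f i < m}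

instance (k m : ℕ) : Finite (SS k m) := by
  apply Finite.of_injective
    (fun f : SS k m => fun i : Fin k => (⟨f.1 i, f.2.2 i⟩ : Fin m))
  intro f g h
  apply Subtype.ext; funext i
  exact congrArg Fin.val (congrFun h i)

/-- gap lemma for strictly monotone nat sequences -/
theorem gap {s : ℕ} {f : Fin s → ℕ} (hf : StrictMono f) (i j : Fin s)
    (h : (i : ℕ) ≤ (j : ℕ)) : f i + ((j : ℕ) - (i : ℕ)) ≤ f j := by
  obtain ⟨d, hd⟩ : ∃ d, (j : ℕ) = (i : ℕ) + d := ⟨(j : ℕ) - i, by omega⟩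
  have : (j:ℕ) - (i:ℕ) = d := by omega
  rw [this]
  clear this h
  induction d generalizing j with
  | zero =>
    have : j = i := Fin.ext (by omega)
    simp [this]
  | succ d ih =>
    have hj' : (i:ℕ) + d < s := by have := j.isLt; omega
    have h1 := ih ⟨(i:ℕ) + d, hj'⟩ rfl
    have h2 : f ⟨(i:ℕ) + d, hj'⟩ < f j := by
      apply hf
      rw [Fin.lt_def]
      simp; omega
    omega

theorem card_SS (k m : ℕ) : Nat.card (SS k m) = m.choose k := by
  have e : SS k m ≃ {s : Finset (Fin m) // s.card = k} :=
  { toFun := fun f =>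
      ⟨Finset.univ.map ⟨fun i => (⟨f.1 i, f.2.2 i⟩ : Fin m),
        fun a b h => f.2.1.injective (congrArg Fin.val h)⟩, by simp⟩
    invFun := fun s =>
      ⟨fun i => ((s.1.orderEmbOfFin s.2) i : ℕ),
        fun a b h => (s.1.orderEmbOfFin s.2).strictMono h,
        fun i => ((s.1.orderEmbOfFin s.2) i).isLt⟩
    left_inv := by
      intro f
      apply Subtype.ext; funext i
      have hmem : ∀ x, (⟨f.1 x, f.2.2 x⟩ : Fin m) ∈
          Finset.univ.map ⟨fun i => (⟨f.1 i, f.2.2 i⟩ : Fin m),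
            fun a b h => f.2.1.injective (congrArg Fin.val h)⟩ := by
        intro x; simp [Finset.mem_map]; exact ⟨x, rfl⟩
      have := Finset.orderEmbOfFin_unique (f := fun i => (⟨f.1 i, f.2.2 i⟩ : Fin m))
        (by simp) hmem (fun a b h => Fin.mk_lt_mk.mpr (f.2.1 h))
      exact (congrArg Fin.val (congrFun this.symm i))
    right_inv := by
      intro s
      apply Subtype.ext
      ext x
      simp only [Finset.mem_map, Finset.mem_univ, Function.Embedding.coeFn_mk, true_and]
      constructor
      · rintro ⟨i, rfl⟩
        have := Finset.orderEmbOfFin_mem s.1 s.2 i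
        exact this
      · intro hx
        have : x ∈ Set.range (s.1.orderEmbOfFin s.2) := by
          rw [Finset.range_orderEmbOfFin]; exact hx
        obtain ⟨i, hi⟩ := this
        exact ⟨i, by rw [← hi]; rfl⟩ }
  rw [Nat.card_congr e, Nat.card_eq_fintype_card, Fintype.card_finset_len,
    Fintype.card_fin]


section Reflect
variable {k m : ℕ}

/-- the upper sequence after tail-swap at `j` -/
def Dfun (B C : Fin k → ℕ) (j : ℕ) (hj : j < k) : Fin (k+1) → ℕ := fun i =>
  if h : (i : ℕ) ≤ j then C ⟨i, by omega⟩
  else B ⟨(i : ℕ) - 1, by have := i.isLt; omega⟩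

/-- the lower sequence after tail-swap at `j` -/
def Efun (B C : Fin k → ℕ) (j : ℕ) : Fin (k-1) → ℕ := fun i =>
  if (i : ℕ) < j then B ⟨i, by have := i.isLt; omega⟩
  else C ⟨(i : ℕ) + 1, by have := i.isLt; omega⟩

/-- inverse tail-swap, first component -/
def uB (D : Fin (k+1) → ℕ) (E : Fin (k-1) → ℕ) (j : ℕ) (hj : j ≤ k - 1) :
    Fin k → ℕ := fun i =>
  if h : (i : ℕ) < j then E ⟨i, by omega⟩
  else D ⟨(i : ℕ) + 1, by have := i.isLt; omega⟩

/-- inverse tail-swap, second component -/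
def uC (D : Fin (k+1) → ℕ) (E : Fin (k-1) → ℕ) (j : ℕ) (hj : j ≤ k - 1) :
    Fin k → ℕ := fun i =>
  if h : (i : ℕ) ≤ j then D ⟨i, by have := i.isLt; omega⟩
  else E ⟨(i : ℕ) - 1, by have := i.isLt; omega⟩

theorem Dfun_strictMono {B C : Fin k → ℕ} (hB : StrictMono B) (hC : StrictMono C)
    {j : ℕ} (hj : j < k) (hcross : C ⟨j, hj⟩ < B ⟨j, hj⟩) :
    StrictMono (Dfun B C j hj) := by
  intro x y hxy
  have hxy' : (x : ℕ) < (y : ℕ) := hxy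
  unfold Dfun
  by_cases hx : (x : ℕ) ≤ j <;> by_cases hy : (y : ℕ) ≤ j <;>
    simp only [hx, hy, dif_pos, dif_neg, not_false_iff]
  · exact hC (Fin.mk_lt_mk.mpr hxy')
  · calc C ⟨x, by omega⟩ ≤ C ⟨j, hj⟩ := hC.monotone (Fin.mk_le_mk.mpr hx)
      _ < B ⟨j, hj⟩ := hcross
      _ ≤ B ⟨(y:ℕ) - 1, by have := y.isLt; omega⟩ :=
        hB.monotone (Fin.mk_le_mk.mpr (by omega))
  · omega
  · exact hB (Fin.mk_lt_mk.mpr (by omega))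

theorem Dfun_lt {B C : Fin k → ℕ} (hBm : ∀ i, B i < m) (hCm : ∀ i, C i < m - 1)
    {j : ℕ} (hj : j < k) : ∀ i, Dfun B C j hj i < m := by
  intro i
  unfold Dfun
  split_ifs with h
  · have := hCm ⟨i, by omega⟩; omega
  · exact hBm _

theorem Efun_strictMono {B C : Fin k → ℕ} (hB : StrictMono B) (hC : StrictMono C)
    {j : ℕ} (hmin : ∀ i (h : i < k), i < j → B ⟨i, h⟩ ≤ C ⟨i, h⟩) :
    StrictMono (Efun B C j) := by
  intro x y hxy
  have hxy' : (x : ℕ) < (y : ℕ) := hxy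
  unfold Efun
  by_cases hx : (x : ℕ) < j <;> by_cases hy : (y : ℕ) < j <;>
    simp only [hx, hy, if_pos, if_neg, not_false_iff]
  · exact hB (Fin.mk_lt_mk.mpr hxy')
  · calc B ⟨x, by have := x.isLt; omega⟩ ≤ C ⟨x, by have := x.isLt; omega⟩ :=
        hmin _ _ hx
      _ < C ⟨(y:ℕ)+1, by have := y.isLt; omega⟩ := hC (Fin.mk_lt_mk.mpr (by omega))
  · omega
  · exact hC (Fin.mk_lt_mk.mpr (by omega))

theorem Efun_lt {B C : Fin k → ℕ} (hCm : ∀ i, C i < m - 1)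
    {j : ℕ} (hmin : ∀ i (h : i < k), i < j → B ⟨i, h⟩ ≤ C ⟨i, h⟩) :
    ∀ i, Efun B C j i < m - 1 := by
  intro i
  unfold Efun
  split_ifs with h
  · have h2 := hmin i (by have := i.isLt; omega) h
    have := hCm ⟨i, by have := i.isLt; omega⟩
    omega
  · exact hCm _

theorem uB_strictMono {D : Fin (k+1) → ℕ} {E : Fin (k-1) → ℕ}
    (hD : StrictMono D) (hE : StrictMono E) {j : ℕ} (hj : j ≤ k - 1)
    (hmin : ∀ i (h : i < k - 1), i < j → E ⟨i, h⟩ ≤ D ⟨i, by omega⟩) :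
    StrictMono (uB D E j hj) := by
  intro x y hxy
  have hxy' : (x : ℕ) < (y : ℕ) := hxy
  unfold uB
  by_cases hx : (x : ℕ) < j <;> by_cases hy : (y : ℕ) < j <;>
    simp only [hx, hy, dif_pos, dif_neg, not_false_iff]
  · exact hE (Fin.mk_lt_mk.mpr hxy')
  · calc E ⟨x, by omega⟩ ≤ D ⟨x, by have := x.isLt; omega⟩ := hmin _ _ hx
      _ < D ⟨(y:ℕ)+1, by have := y.isLt; omega⟩ := hD (Fin.mk_lt_mk.mpr (by omega))
  · omega
  · exact hD (Fin.mk_lt_mk.mpr (by omega))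

theorem uB_lt {D : Fin (k+1) → ℕ} {E : Fin (k-1) → ℕ}
    (hDm : ∀ i, D i < m) (hEm : ∀ i, E i < m - 1) {j : ℕ} (hj : j ≤ k - 1) :
    ∀ i, uB D E j hj i < m := by
  intro i
  unfold uB
  split_ifs with h
  · have := hEm ⟨i, by omega⟩; omega
  · exact hDm _

theorem uC_strictMono {D : Fin (k+1) → ℕ} {E : Fin (k-1) → ℕ}
    (hD : StrictMono D) (hE : StrictMono E) {j : ℕ} (hj : j ≤ k - 1)
    (hcross : ∀ h : j < k - 1, D ⟨j, by omega⟩ < E ⟨j, h⟩) :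
    StrictMono (uC D E j hj) := by
  intro x y hxy
  have hxy' : (x : ℕ) < (y : ℕ) := hxy
  unfold uC
  by_cases hx : (x : ℕ) ≤ j <;> by_cases hy : (y : ℕ) ≤ j <;>
    simp only [hx, hy, dif_pos, dif_neg, not_false_iff]
  · exact hD (Fin.mk_lt_mk.mpr hxy')
  · have hjk : j < k - 1 := by have := y.isLt; omega
    calc D ⟨x, by have := x.isLt; omega⟩ ≤ D ⟨j, by omega⟩ :=
        hD.monotone (Fin.mk_le_mk.mpr hx)
      _ < E ⟨j, hjk⟩ := hcross hjk
      _ ≤ E ⟨(y:ℕ) - 1, by have := y.isLt; omega⟩ :=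
        hE.monotone (Fin.mk_le_mk.mpr (by omega))
  · omega
  · exact hE (Fin.mk_lt_mk.mpr (by omega))

theorem uC_lt {D : Fin (k+1) → ℕ} {E : Fin (k-1) → ℕ}
    (hD : StrictMono D) (hDm : ∀ i, D i < m) (hEm : ∀ i, E i < m - 1)
    {j : ℕ} (hj : j ≤ k - 1) (hk : 1 ≤ k) :
    ∀ i, uC D E j hj i < m - 1 := by
  intro i
  unfold uC
  split_ifs with h
  · have hgap := gap hD ⟨(i:ℕ), by have := i.isLt; omega⟩ ⟨k, by omega⟩
      (by simp <;> omega)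
    have := hDm ⟨k, by omega⟩
    simp only at hgap
    have hik : (i : ℕ) < k := i.isLt
    omega
  · exact hEm _

/-- pure roundtrip: recovering `B` -/
theorem uB_DE (B C : Fin k → ℕ) {j j2 : ℕ} (hj : j < k) (hj2 : j2 ≤ k - 1)
    (hjj : j = j2) : uB (Dfun B C j hj) (Efun B C j) j2 hj2 = B := by
  subst hjj
  funext i
  unfold uB Dfun Efun
  by_cases h : (i : ℕ) < j
  · rw [dif_pos h]
    simp only [h, if_pos]
  · rw [dif_neg h]
    rw [dif_neg (by simp <;> omega)]
    all_goals exact congrArg _ (Fin.ext (by simp <;> omega))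

/-- pure roundtrip: recovering `C` -/
theorem uC_DE (B C : Fin k → ℕ) {j j2 : ℕ} (hj : j < k) (hj2 : j2 ≤ k - 1)
    (hjj : j = j2) : uC (Dfun B C j hj) (Efun B C j) j2 hj2 = C := by
  subst hjj
  funext i
  unfold uC Dfun Efun
  by_cases h : (i : ℕ) ≤ j
  · rw [dif_pos h]
    rw [dif_pos (by simpa using h)]
    all_goals exact congrArg _ (Fin.ext (by simp <;> omega))
  · rw [dif_neg h]
    rw [if_neg (by simp <;> omega)]
    all_goals exact congrArg _ (Fin.ext (by simp <;> omega))

/-- pure roundtrip: recovering `D` -/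
theorem D_uBuC (D : Fin (k+1) → ℕ) (E : Fin (k-1) → ℕ) {j j2 : ℕ}
    (hj : j ≤ k - 1) (hj2 : j2 < k) (hjj : j = j2) (hk : 1 ≤ k) :
    Dfun (uB D E j hj) (uC D E j hj) j2 hj2 = D := by
  subst hjj
  funext i
  unfold Dfun uB uC
  by_cases h : (i : ℕ) ≤ j
  · rw [dif_pos h]
    rw [dif_pos (by simpa using h)]
    all_goals exact congrArg _ (Fin.ext (by simp <;> omega))
  · rw [dif_neg h]
    rw [dif_neg (by simp <;> omega)]
    congr 1
    exact Fin.ext (by simp; have := i.isLt; omega)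

/-- pure roundtrip: recovering `E` -/
theorem E_uBuC (D : Fin (k+1) → ℕ) (E : Fin (k-1) → ℕ) {j j2 : ℕ}
    (hj : j ≤ k - 1) (hjj : j = j2) (hk : 1 ≤ k) :
    Efun (uB D E j hj) (uC D E j hj) j2 = E := by
  subst hjj
  funext i
  unfold Efun uB uC
  by_cases h : (i : ℕ) < j
  · rw [if_pos h]
    rw [dif_pos (by simpa using h)]
    all_goals exact congrArg _ (Fin.ext (by simp <;> omega))
  · rw [if_neg h]
    rw [dif_neg (by simp <;> omega)]
    all_goals exact congrArg _ (Fin.ext (by simp <;> omega))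

end Reflect

section Bijection
variable {k m : ℕ}

/-- the set of "bad" (crossing) pairs -/
abbrev Bad (k m : ℕ) := {w : SS k m × SS k (m-1) // ¬ ∀ i, w.1.1 i ≤ w.2.1 i}

theorem hp_of (x : Bad k m) :
    ∃ i, ∃ h : i < k, x.1.2.1 ⟨i, h⟩ < x.1.1.1 ⟨i, h⟩ := by
  have hw := x.2
  push_neg at hw
  obtain ⟨i, hi⟩ := hw
  exact ⟨i, i.isLt, by simpa using hi⟩

noncomputable def jf (x : Bad k m) : ℕ := Nat.find (hp_of x)

theorem jf_lt (x : Bad k m) : jf x < k := by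
  obtain ⟨h, _⟩ := Nat.find_spec (hp_of x); exact h

theorem jf_cross (x : Bad k m) :
    x.1.2.1 ⟨jf x, jf_lt x⟩ < x.1.1.1 ⟨jf x, jf_lt x⟩ := by
  obtain ⟨h, hlt⟩ := Nat.find_spec (hp_of x); exact hlt

theorem jf_min (x : Bad k m) :
    ∀ i (h : i < k), i < jf x → x.1.1.1 ⟨i, h⟩ ≤ x.1.2.1 ⟨i, h⟩ := by
  intro i h hij
  have hmin := Nat.find_min (hp_of x) hij
  push_neg at hmin
  exact hmin h

theorem hq_of (y : SS (k+1) m × SS (k-1) (m-1)) :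
    ∃ i, i = k - 1 ∨ ∃ h : i < k - 1, y.1.1 ⟨i, by omega⟩ < y.2.1 ⟨i, h⟩ :=
  ⟨k - 1, Or.inl rfl⟩

noncomputable def jb (y : SS (k+1) m × SS (k-1) (m-1)) : ℕ := Nat.find (hq_of y)

theorem jb_le (y : SS (k+1) m × SS (k-1) (m-1)) : jb y ≤ k - 1 :=
  Nat.find_le (Or.inl rfl)

theorem jb_cross (y : SS (k+1) m × SS (k-1) (m-1)) :
    ∀ h : jb y < k - 1, y.1.1 ⟨jb y, by omega⟩ < y.2.1 ⟨jb y, h⟩ := by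
  intro h
  rcases Nat.find_spec (hq_of y) with he | ⟨h', hlt⟩
  · have : jb y = k - 1 := he
    omega
  · exact hlt

theorem jb_min (y : SS (k+1) m × SS (k-1) (m-1)) :
    ∀ i (h : i < k - 1), i < jb y → y.2.1 ⟨i, h⟩ ≤ y.1.1 ⟨i, by omega⟩ := by
  intro i h hij
  have hnq := Nat.find_min (hq_of y) hij
  push_neg at hnq
  exact hnq.2 h

noncomputable def fwd (x : Bad k m) : SS (k+1) m × SS (k-1) (m-1) :=
  (⟨Dfun x.1.1.1 x.1.2.1 (jf x) (jf_lt x),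
    Dfun_strictMono x.1.1.2.1 x.1.2.2.1 (jf_lt x) (jf_cross x),
    Dfun_lt x.1.1.2.2 x.1.2.2.2 (jf_lt x)⟩,
   ⟨Efun x.1.1.1 x.1.2.1 (jf x),
    Efun_strictMono x.1.1.2.1 x.1.2.2.1 (jf_min x),
    Efun_lt x.1.2.2.2 (jf_min x)⟩)

noncomputable def bwd (hk : 1 ≤ k) (y : SS (k+1) m × SS (k-1) (m-1)) : Bad k m :=
  ⟨(⟨uB y.1.1 y.2.1 (jb y) (jb_le y),
     uB_strictMono y.1.2.1 y.2.2.1 (jb_le y) (jb_min y),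
     uB_lt y.1.2.2 y.2.2.2 (jb_le y)⟩,
    ⟨uC y.1.1 y.2.1 (jb y) (jb_le y),
     uC_strictMono y.1.2.1 y.2.2.1 (jb_le y) (jb_cross y),
     uC_lt y.1.2.1 y.1.2.2 y.2.2.2 (jb_le y) hk⟩),
   by
     intro hall
     have hjk : jb y < k := by have := jb_le y; omega
     have h1 : uB y.1.1 y.2.1 (jb y) (jb_le y) ⟨jb y, hjk⟩ ≤
         uC y.1.1 y.2.1 (jb y) (jb_le y) ⟨jb y, hjk⟩ := hall ⟨jb y, hjk⟩
     unfold uB uC at h1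
     rw [dif_neg (by simp)] at h1
     rw [dif_pos (by simp)] at h1
     refine absurd h1 (not_le.mpr ?_)
     exact y.1.2.1 (Fin.mk_lt_mk.mpr (by simp <;> omega))⟩

theorem jb_fwd (hk : 1 ≤ k) (x : Bad k m) : jb (fwd x) = jf x := by
  have hjlt := jf_lt x
  unfold jb
  rw [Nat.find_eq_iff]
  constructor
  · by_cases hcase : jf x = k - 1
    · exact Or.inl hcase
    · refine Or.inr ⟨by omega, ?_⟩
      show Dfun x.1.1.1 x.1.2.1 (jf x) (jf_lt x) ⟨jf x, by omega⟩ <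
        Efun x.1.1.1 x.1.2.1 (jf x) ⟨jf x, by omega⟩
      unfold Dfun Efun
      rw [dif_pos (by simp)]
      rw [if_neg (by simp)]
      exact x.1.2.2.1 (Fin.mk_lt_mk.mpr (by simp <;> omega))
  · intro i hij
    push_neg
    refine ⟨by omega, ?_⟩
    intro h
    show Efun x.1.1.1 x.1.2.1 (jf x) ⟨i, by omega⟩ ≤
      Dfun x.1.1.1 x.1.2.1 (jf x) (jf_lt x) ⟨i, by omega⟩
    unfold Dfun Efun
    rw [if_pos (by simp <;> omega)]
    rw [dif_pos (by simp <;> omega)]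
    exact jf_min x i (by omega) (by omega)

theorem jf_bwd (hk : 1 ≤ k) (y : SS (k+1) m × SS (k-1) (m-1)) :
    jf (bwd hk y) = jb y := by
  have hjle := jb_le y
  unfold jf
  rw [Nat.find_eq_iff]
  constructor
  · refine ⟨by omega, ?_⟩
    show uC y.1.1 y.2.1 (jb y) (jb_le y) ⟨jb y, by omega⟩ <
      uB y.1.1 y.2.1 (jb y) (jb_le y) ⟨jb y, by omega⟩
    unfold uB uC
    rw [dif_pos (by simp)]
    rw [dif_neg (by simp)]
    exact y.1.2.1 (Fin.mk_lt_mk.mpr (by simp <;> omega))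
  · intro i hij
    push_neg
    intro h
    show uB y.1.1 y.2.1 (jb y) (jb_le y) ⟨i, by omega⟩ ≤
      uC y.1.1 y.2.1 (jb y) (jb_le y) ⟨i, by omega⟩
    unfold uB uC
    rw [dif_pos (by simp <;> omega)]
    rw [dif_pos (by simp <;> omega)]
    exact jb_min y i (by omega) (by omega)

noncomputable def badEquiv (hk : 1 ≤ k) : Bad k m ≃ (SS (k+1) m × SS (k-1) (m-1)) where
  toFun := fwd
  invFun := bwd hk
  left_inv := by
    intro x
    apply Subtype.ext
    refine Prod.ext ?_ ?_ <;> apply Subtype.ext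
    · exact uB_DE x.1.1.1 x.1.2.1 (jf_lt x) (jb_le _) (jb_fwd hk x).symm
    · exact uC_DE x.1.1.1 x.1.2.1 (jf_lt x) (jb_le _) (jb_fwd hk x).symm
  right_inv := by
    intro y
    refine Prod.ext ?_ ?_ <;> apply Subtype.ext
    · exact D_uBuC y.1.1 y.2.1 (jb_le y) (jf_lt _) (jf_bwd hk y).symm hk
    · exact E_uBuC y.1.1 y.2.1 (jb_le y) (jf_bwd hk y).symm hk

theorem card_bad (hk : 1 ≤ k) :
    Nat.card (Bad k m) = m.choose (k+1) * (m-1).choose (k-1) := by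
  rw [Nat.card_congr (badEquiv hk), Nat.card_prod, card_SS, card_SS]

end Bijection


section Encode

theorem bound_last {s m : ℕ} {f : Fin s → ℕ} (hf : StrictMono f)
    (hfm : ∀ i, f i < m) (i : Fin s) : f i + (s - 1 - (i : ℕ)) < m := by
  have hs : 0 < s := i.pos
  have hkk : s - 1 < s := by omega
  have hg : f i + (s - 1 - (i : ℕ)) ≤ f ⟨s - 1, hkk⟩ :=
    gap hf i ⟨s - 1, hkk⟩ (by simp <;> omega)
  have hb := hfm ⟨s - 1, hkk⟩
  omega

theorem ge_idx {s : ℕ} {f : Fin s → ℕ} (hf : StrictMono f) (i : Fin s) :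
    (i : ℕ) ≤ f i := by
  have hs : 0 < s := i.pos
  have hg : f ⟨0, hs⟩ + ((i : ℕ) - 0) ≤ f i := gap hf ⟨0, hs⟩ i (by simp)
  omega

def goodEquiv (k n : ℕ) (hk : 1 ≤ k) (hn : 1 ≤ n) :
    {p : (Fin k → Fin (n + 1)) × (Fin k → Fin (n + 1)) //
        Monotone p.1 ∧ Monotone p.2 ∧ ∀ i, p.1 i < p.2 i} ≃
    {w : SS k (n + k) × SS k (n + k - 1) // ∀ i, w.1.1 i ≤ w.2.1 i} where
  toFun p :=
    ⟨(⟨fun i => (p.1.1 i : ℕ) + i, by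
        intro a b hab
        have h1 : (p.1.1 a : ℕ) ≤ p.1.1 b := p.2.1 hab.le
        have h2 : (a : ℕ) < b := hab
        show (p.1.1 a : ℕ) + a < (p.1.1 b : ℕ) + b
        omega, by
        intro i
        have h1 := (p.1.1 i).isLt
        have h2 := i.isLt
        show (p.1.1 i : ℕ) + i < n + k
        omega⟩,
      ⟨fun i => ((p.1.2 i : ℕ) - 1) + i, by
        intro a b hab
        have h1 : (p.1.2 a : ℕ) ≤ p.1.2 b := p.2.2.1 hab.le
        have h2 : (a : ℕ) < b := hab
        show (p.1.2 a : ℕ) - 1 + a < (p.1.2 b : ℕ) - 1 + b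
        omega, by
        intro i
        have h1 := (p.1.2 i).isLt
        have h2 := i.isLt
        have h3 : (p.1.1 i : ℕ) < p.1.2 i := p.2.2.2 i
        show (p.1.2 i : ℕ) - 1 + i < n + k - 1
        omega⟩), by
      intro i
      have h3 : (p.1.1 i : ℕ) < p.1.2 i := p.2.2.2 i
      show (p.1.1 i : ℕ) + i ≤ (p.1.2 i : ℕ) - 1 + i
      omega⟩
  invFun w :=
    ⟨(fun i => ⟨w.1.1.1 i - i, by
        have h1 := bound_last w.1.1.2.1 w.1.1.2.2 i
        have h2 := i.isLt
        omega⟩,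
      fun i => ⟨w.1.2.1 i - i + 1, by
        have h1 := bound_last w.1.2.2.1 w.1.2.2.2 i
        have h2 := i.isLt
        have h3 := ge_idx w.1.2.2.1 i
        omega⟩), by
      intro a b hab
      rw [Fin.mk_le_mk]
      have hg := gap w.1.1.2.1 a b hab
      have h2 : (a : ℕ) ≤ b := hab
      omega, by
      intro a b hab
      rw [Fin.mk_le_mk]
      have hg := gap w.1.2.2.1 a b hab
      have h2 : (a : ℕ) ≤ b := hab
      omega, by
      intro i
      rw [Fin.mk_lt_mk]
      have h1 := w.2 i
      omega⟩
  left_inv := by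
    intro p
    apply Subtype.ext
    refine Prod.ext ?_ ?_ <;> funext i <;> apply Fin.ext
    · show (p.1.1 i : ℕ) + i - i = p.1.1 i
      omega
    · show (p.1.2 i : ℕ) - 1 + i - i + 1 = p.1.2 i
      have h3 : (p.1.1 i : ℕ) < p.1.2 i := p.2.2.2 i
      omega
  right_inv := by
    intro w
    apply Subtype.ext
    refine Prod.ext ?_ ?_ <;> apply Subtype.ext <;> funext i
    · show w.1.1.1 i - i + i = w.1.1.1 i
      have h1 := ge_idx w.1.1.2.1 i
      omega
    · show w.1.2.1 i - i + 1 - 1 + i = w.1.2.1 i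
      have h1 := ge_idx w.1.2.2.1 i
      omega

end Encode

theorem main (k n : ℕ) (hk : 1 ≤ k) (hn : 1 ≤ n) :
    (k + 1) * Nat.card {p : (Fin k → Fin (n + 1)) × (Fin k → Fin (n + 1)) //
        Monotone p.1 ∧ Monotone p.2 ∧ ∀ i, p.1 i < p.2 i} =
      Nat.choose (n + k) k * Nat.choose (n + k - 1) k := by
  have hG := Nat.card_congr (goodEquiv k n hk hn)
  have hsplit : Nat.card {w : SS k (n + k) × SS k (n + k - 1) // ∀ i, w.1.1 i ≤ w.2.1 i}
      + Nat.card (Bad k (n + k))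
      = (n + k).choose k * (n + k - 1).choose k := by
    have h1 : Nat.card ({w : SS k (n + k) × SS k (n + k - 1) // ∀ i, w.1.1 i ≤ w.2.1 i}
        ⊕ Bad k (n + k)) = Nat.card (SS k (n + k) × SS k (n + k - 1)) :=
      Nat.card_congr (Equiv.sumCompl _)
    rw [Nat.card_sum, Nat.card_prod, card_SS, card_SS] at h1
    exact h1
  have hX : Nat.card (Bad k (n + k))
      = (n + k).choose (k + 1) * (n + k - 1).choose (k - 1) := card_bad hk
  have h1 : (n + k).choose (k + 1) * (k + 1) = (n + k).choose k * n := by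
    rw [Nat.choose_succ_right_eq]; congr 1; omega
  have h2 : (n + k - 1).choose k * k = (n + k - 1).choose (k - 1) * n := by
    have h3 := Nat.choose_succ_right_eq (n + k - 1) (k - 1)
    rw [Nat.sub_add_cancel hk] at h3
    rw [h3]; congr 1; omega
  have key : (k + 1) * ((n + k).choose (k + 1) * (n + k - 1).choose (k - 1)) * n
      = k * ((n + k).choose k * (n + k - 1).choose k) * n := by
    calc (k + 1) * ((n + k).choose (k + 1) * (n + k - 1).choose (k - 1)) * n
        = ((n + k).choose (k + 1) * (k + 1)) * ((n + k - 1).choose (k - 1) * n) := by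
          ring
      _ = ((n + k).choose k * n) * ((n + k - 1).choose k * k) := by rw [h1, ← h2]
      _ = k * ((n + k).choose k * (n + k - 1).choose k) * n := by ring
  have key2 : (k + 1) * ((n + k).choose (k + 1) * (n + k - 1).choose (k - 1))
      = k * ((n + k).choose k * (n + k - 1).choose k) :=
    Nat.eq_of_mul_eq_mul_right (by omega) key
  rw [hG]
  rw [← hX] at key2
  have e1 : (k + 1) * Nat.card {w : SS k (n + k) × SS k (n + k - 1) // ∀ i, w.1.1 i ≤ w.2.1 i}
      + (k + 1) * Nat.card (Bad k (n + k))
      = (k + 1) * ((n + k).choose k * (n + k - 1).choose k) := by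
    rw [← Nat.mul_add, hsplit]
  rw [key2] at e1
  have e2 : (k + 1) * ((n + k).choose k * (n + k - 1).choose k)
      = (n + k).choose k * (n + k - 1).choose k
        + k * ((n + k).choose k * (n + k - 1).choose k) := by ring
  rw [e2] at e1
  exact Nat.add_right_cancel e1


end PP

/-- The number of parallelogram polyominoes of width `k+1` and height `n`,
encoded as pairs `(b, a)` of weakly increasing functions `Fin k → Fin (n+1)`
with `b i < a i`, satisfies `(k+1) * |P| = C(n+k, k) * C(n+k-1, k)`. -/
theorem stmt0 (k n : ℕ) (hk : 1 ≤ k) (hn : 1 ≤ n) :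
    (k + 1) * Nat.card {p : (Fin k → Fin (n + 1)) × (Fin k → Fin (n + 1)) //
        Monotone p.1 ∧ Monotone p.2 ∧ ∀ i, p.1 i < p.2 i} =
      Nat.choose (n + k) k * Nat.choose (n + k - 1) k := by
  exact PP.main k n hk hn
end

section
/- Fix natural numbers k ≥ 1 and n ≥ 1. Let P be the set of pairs (b, a) of functions b, a : Fin k → Fin (n+1) such that both b and a are weakly increasing (monotone) and b i < a i for every i : Fin k. Then |P| = C(n+k, k)² − C(n+k+1, k+1) · C(n+k-1, k-1). -/
/-- strictly monotone maps into a fintype linear order ↔ finsets of given card -/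
def strictMonoEquivFinset (m : ℕ) (α : Type*) [LinearOrder α] [Fintype α] :
    {f : Fin m → α // StrictMono f} ≃ {s : Finset α // s.card = m} where
  toFun f := ⟨Finset.univ.map ⟨f.1, f.2.injective⟩, by simp⟩
  invFun s := ⟨s.1.orderEmbOfFin s.2, (s.1.orderEmbOfFin s.2).strictMono⟩
  left_inv f := by
    apply Subtype.ext
    exact (Finset.orderEmbOfFin_unique _ (fun x => by simp) f.2).symm
  right_inv s := by
    apply Subtype.ext
    ext x
    simp only [Finset.mem_map, Finset.mem_univ, true_and, Function.Embedding.coeFn_mk]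
    constructor
    · rintro ⟨i, rfl⟩; exact Finset.orderEmbOfFin_mem _ _ _
    · intro hx
      have := Finset.range_orderEmbOfFin s.1 s.2
      have : x ∈ Set.range (s.1.orderEmbOfFin s.2) := by rw [this]; exact hx
      obtain ⟨i, hi⟩ := this
      exact ⟨i, hi⟩

lemma strictmono_aux {m M : ℕ} {g : Fin m → Fin M} (hg : StrictMono g) :
    ∀ d : ℕ, ∀ (i j : Fin m), (j : ℕ) = i + d → (g i : ℕ) + d ≤ g j := by
  intro d
  induction d with
  | zero => intro i j h; have hij : i = j := Fin.ext (by omega); subst hij; omega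
  | succ d ih =>
    intro i j h
    have hj' : (i : ℕ) + d < m := by omega
    have h1 := ih i ⟨(i : ℕ) + d, hj'⟩ rfl
    have h2 : (⟨(i : ℕ) + d, hj'⟩ : Fin m) < j := by simp [Fin.lt_def]; omega
    have := hg h2
    rw [Fin.lt_def] at this
    omega

def monoEquivStrictMono (m N : ℕ) :
    {f : Fin m → Fin (N + 1) // Monotone f} ≃ {g : Fin m → Fin (N + m) // StrictMono g} where
  toFun f := ⟨fun i => ⟨f.1 i + i, by have := (f.1 i).isLt; have := i.isLt; omega⟩, by
    intro i j hij
    rw [Fin.lt_def] at hij ⊢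
    have := f.2 hij.le
    rw [Fin.le_def] at this
    simp only []
    omega⟩
  invFun g := ⟨fun i => ⟨g.1 i - i, by
    have hm : (i : ℕ) < m := i.isLt
    have h1 := strictmono_aux g.2 (m - 1 - i) i ⟨m - 1, by omega⟩ (by simp; omega)
    have := (g.1 ⟨m - 1, by omega⟩).isLt
    omega⟩, by
    intro i j hij
    rw [Fin.le_def] at hij ⊢
    have h1 := strictmono_aux g.2 ((j : ℕ) - i) i j (by omega)
    simp only []
    omega⟩
  left_inv f := by
    apply Subtype.ext; funext i; apply Fin.ext; simp
  right_inv g := by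
    apply Subtype.ext; funext i; apply Fin.ext
    have h1 := strictmono_aux g.2 ((i : ℕ) - 0) ⟨0, by have := i.isLt; omega⟩ i (by simp)
    show ((g.1 i : ℕ) - ↑i) + ↑i = g.1 i
    omega

lemma card_mono (m N : ℕ) :
    Nat.card {f : Fin m → Fin (N + 1) // Monotone f} = (N + m).choose m := by
  rw [Nat.card_congr ((monoEquivStrictMono m N).trans (strictMonoEquivFinset m (Fin (N + m)))),
    Nat.card_eq_fintype_card, Fintype.card_finset_len, Fintype.card_fin]

/-! Extension of a `Fin`-indexed function to all of `ℕ`, with top default. -/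

def ex {m n : ℕ} (f : Fin m → Fin (n + 1)) : ℕ → ℕ :=
  fun x => if h : x < m then (f ⟨x, h⟩ : ℕ) else n

lemma ex_le {m n : ℕ} (f : Fin m → Fin (n + 1)) (x : ℕ) : ex f x ≤ n := by
  unfold ex; split
  · exact Nat.lt_succ_iff.mp (f _).isLt
  · exact le_refl n

lemma ex_eq {m n : ℕ} (f : Fin m → Fin (n + 1)) {x : ℕ} (h : x < m) :
    ex f x = f ⟨x, h⟩ := by simp [ex, h]

lemma ex_fin {m n : ℕ} (f : Fin m → Fin (n + 1)) (j : Fin m) : ex f j = f j := by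
  rw [ex_eq f j.isLt]

lemma ex_mono {m n : ℕ} {f : Fin m → Fin (n + 1)} (hf : Monotone f) : Monotone (ex f) := by
  intro x y hxy
  by_cases hx : x < m <;> by_cases hy : y < m <;> simp [ex, hx, hy]
  · exact hf (by simp [Fin.mk_le_mk]; omega)
  · exact Nat.lt_succ_iff.mp (f _).isLt
  · omega

variable {K n : ℕ}

/-! Forward map: bad pair `(b, a)` to `(u, v)`. -/

def i0 (b a : Fin (K + 1) → Fin (n + 1)) : ℕ :=
  Nat.find (⟨K + 1, Or.inr rfl⟩ : ∃ j, (j < K + 1 ∧ ex a j ≤ ex b j) ∨ j = K + 1)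

lemma i0_eq (b a : Fin (K + 1) → Fin (n + 1))
    (hex : ∃ j, (j < K + 1 ∧ ex a j ≤ ex b j) ∨ j = K + 1) :
    i0 b a = Nat.find hex := rfl

lemma i0_le {b a : Fin (K + 1) → Fin (n + 1)}
    (hc : ∃ i : Fin (K + 1), (a i : ℕ) ≤ b i) : i0 b a ≤ K := by
  obtain ⟨i, hi⟩ := hc
  have hex : ∃ j, (j < K + 1 ∧ ex a j ≤ ex b j) ∨ j = K + 1 := ⟨K + 1, Or.inr rfl⟩
  have hP : ((i : ℕ) < K + 1 ∧ ex a (i : ℕ) ≤ ex b (i : ℕ)) ∨ (i : ℕ) = K + 1 :=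
    Or.inl ⟨i.isLt, by rw [ex_fin, ex_fin]; exact hi⟩
  have h1 := Nat.find_min' hex hP
  have := i.isLt
  rw [i0_eq b a hex]
  omega

lemma i0_cross {b a : Fin (K + 1) → Fin (n + 1)}
    (hc : ∃ i : Fin (K + 1), (a i : ℕ) ≤ b i) :
    ex a (i0 b a) ≤ ex b (i0 b a) := by
  have hex : ∃ j, (j < K + 1 ∧ ex a j ≤ ex b j) ∨ j = K + 1 := ⟨K + 1, Or.inr rfl⟩
  have h := Nat.find_spec hex
  have hle := i0_le hc
  rw [i0_eq b a hex] at hle ⊢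
  rcases h with ⟨_, h⟩ | h
  · exact h
  · omega

lemma i0_min {b a : Fin (K + 1) → Fin (n + 1)}
    (hc : ∃ i : Fin (K + 1), (a i : ℕ) ≤ b i) {j : ℕ} (hj : j < i0 b a) :
    ex b j < ex a j := by
  have hex : ∃ j, (j < K + 1 ∧ ex a j ≤ ex b j) ∨ j = K + 1 := ⟨K + 1, Or.inr rfl⟩
  have hle := i0_le hc
  rw [i0_eq b a hex] at hj
  have h := Nat.find_min hex hj
  push_neg at h
  rw [i0_eq b a hex] at hle
  exact h.1 (by omega)

def fwd (b a : Fin (K + 1) → Fin (n + 1)) :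
    (Fin (K + 2) → Fin (n + 1)) × (Fin K → Fin (n + 1)) :=
  (fun j => ⟨if (j : ℕ) ≤ i0 b a then ex a j else ex b ((j : ℕ) - 1),
     by split <;> exact Nat.lt_succ_of_le (ex_le _ _)⟩,
   fun j => ⟨if (j : ℕ) < i0 b a then ex b j else ex a ((j : ℕ) + 1),
     by split <;> exact Nat.lt_succ_of_le (ex_le _ _)⟩)

/-! Backward map. -/

def i1 (u : Fin (K + 2) → Fin (n + 1)) (v : Fin K → Fin (n + 1)) : ℕ :=
  Nat.find (⟨K, Or.inr rfl⟩ : ∃ j, (j < K ∧ ex u j ≤ ex v j) ∨ j = K)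

lemma i1_eq (u : Fin (K + 2) → Fin (n + 1)) (v : Fin K → Fin (n + 1))
    (hex : ∃ j, (j < K ∧ ex u j ≤ ex v j) ∨ j = K) :
    i1 u v = Nat.find hex := rfl

lemma i1_le (u : Fin (K + 2) → Fin (n + 1)) (v : Fin K → Fin (n + 1)) : i1 u v ≤ K := by
  have hex : ∃ j, (j < K ∧ ex u j ≤ ex v j) ∨ j = K := ⟨K, Or.inr rfl⟩
  rw [i1_eq u v hex]
  exact Nat.find_min' hex (Or.inr rfl)

lemma i1_spec (u : Fin (K + 2) → Fin (n + 1)) (v : Fin K → Fin (n + 1)) :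
    (i1 u v < K ∧ ex u (i1 u v) ≤ ex v (i1 u v)) ∨ i1 u v = K := by
  have hex : ∃ j, (j < K ∧ ex u j ≤ ex v j) ∨ j = K := ⟨K, Or.inr rfl⟩
  rw [i1_eq u v hex]
  exact Nat.find_spec hex

lemma i1_min {u : Fin (K + 2) → Fin (n + 1)} {v : Fin K → Fin (n + 1)} {j : ℕ}
    (hj : j < i1 u v) : ex v j < ex u j := by
  have hex : ∃ j, (j < K ∧ ex u j ≤ ex v j) ∨ j = K := ⟨K, Or.inr rfl⟩
  have hle := i1_le u v
  rw [i1_eq u v hex] at hj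
  have h := Nat.find_min hex hj
  push_neg at h
  rw [i1_eq u v hex] at hle
  exact h.1 (by omega)

def bwd (u : Fin (K + 2) → Fin (n + 1)) (v : Fin K → Fin (n + 1)) :
    (Fin (K + 1) → Fin (n + 1)) × (Fin (K + 1) → Fin (n + 1)) :=
  (fun j => ⟨if (j : ℕ) < i1 u v then ex v j else ex u ((j : ℕ) + 1),
     by split <;> exact Nat.lt_succ_of_le (ex_le _ _)⟩,
   fun j => ⟨if (j : ℕ) ≤ i1 u v then ex u j else ex v ((j : ℕ) - 1),
     by split <;> exact Nat.lt_succ_of_le (ex_le _ _)⟩)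

lemma ex_top {m n : ℕ} (f : Fin m → Fin (n + 1)) {x : ℕ} (h : m ≤ x) : ex f x = n := by
  simp [ex, Nat.not_lt.mpr h]

lemma hcross_of {b a : Fin (K + 1) → Fin (n + 1)} (h : ¬ ∀ i, b i < a i) :
    ∃ i : Fin (K + 1), (a i : ℕ) ≤ b i := by
  push_neg at h
  obtain ⟨i, hi⟩ := h
  exact ⟨i, Fin.le_def.mp hi⟩

section mono
variable {b a : Fin (K + 1) → Fin (n + 1)} {u : Fin (K + 2) → Fin (n + 1)}
  {v : Fin K → Fin (n + 1)}

lemma fwd1_mono (hb : Monotone b) (ha : Monotone a)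
    (hc : ∃ i : Fin (K + 1), (a i : ℕ) ≤ b i) : Monotone (fwd b a).1 := by
  intro x y hxy
  rw [Fin.le_def] at hxy ⊢
  simp only [fwd]
  by_cases hx : (x : ℕ) ≤ i0 b a <;> by_cases hy : (y : ℕ) ≤ i0 b a <;>
    simp only [hx, hy, if_true, if_false, if_pos, if_neg, not_false_iff]
  · exact ex_mono ha hxy
  · calc ex a (x : ℕ) ≤ ex a (i0 b a) := ex_mono ha hx
      _ ≤ ex b (i0 b a) := i0_cross hc
      _ ≤ ex b ((y : ℕ) - 1) := ex_mono hb (by omega)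
  · omega
  · exact ex_mono hb (by omega)

lemma fwd2_mono (hb : Monotone b) (ha : Monotone a)
    (hc : ∃ i : Fin (K + 1), (a i : ℕ) ≤ b i) : Monotone (fwd b a).2 := by
  intro x y hxy
  rw [Fin.le_def] at hxy ⊢
  simp only [fwd]
  by_cases hx : (x : ℕ) < i0 b a <;> by_cases hy : (y : ℕ) < i0 b a <;>
    simp only [hx, hy, if_true, if_false, if_pos, if_neg, not_false_iff]
  · exact ex_mono hb hxy
  · calc ex b (x : ℕ) ≤ ex a (x : ℕ) := (i0_min hc hx).le
      _ ≤ ex a ((y : ℕ) + 1) := ex_mono ha (by omega)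
  · omega
  · exact ex_mono ha (by omega)

lemma bwd1_mono (hu : Monotone u) (hv : Monotone v) : Monotone (bwd u v).1 := by
  intro x y hxy
  rw [Fin.le_def] at hxy ⊢
  simp only [bwd]
  by_cases hx : (x : ℕ) < i1 u v <;> by_cases hy : (y : ℕ) < i1 u v <;>
    simp only [hx, hy, if_true, if_false, if_pos, if_neg, not_false_iff]
  · exact ex_mono hv hxy
  · calc ex v (x : ℕ) ≤ ex u (x : ℕ) := (i1_min hx).le
      _ ≤ ex u ((y : ℕ) + 1) := ex_mono hu (by omega)
  · omega
  · exact ex_mono hu (by omega)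

lemma bwd2_mono (hu : Monotone u) (hv : Monotone v) : Monotone (bwd u v).2 := by
  intro x y hxy
  rw [Fin.le_def] at hxy ⊢
  simp only [bwd]
  by_cases hx : (x : ℕ) ≤ i1 u v <;> by_cases hy : (y : ℕ) ≤ i1 u v <;>
    simp only [hx, hy, if_true, if_false, if_pos, if_neg, not_false_iff]
  · exact ex_mono hu hxy
  · rcases i1_spec u v with ⟨hK, hle⟩ | hK
    · calc ex u (x : ℕ) ≤ ex u (i1 u v) := ex_mono hu hx
        _ ≤ ex v (i1 u v) := hle
        _ ≤ ex v ((y : ℕ) - 1) := ex_mono hv (by omega)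
    · rw [ex_top v (by omega)]
      exact ex_le u _
  · omega
  · exact ex_mono hv (by omega)

lemma bwd_cross (hu : Monotone u) : ¬ ∀ i, (bwd u v).1 i < (bwd u v).2 i := by
  intro h
  have hK := i1_le u v
  have h2 := h ⟨i1 u v, by omega⟩
  rw [Fin.lt_def] at h2
  simp only [bwd, lt_self_iff_false, if_false, le_refl, if_true, if_pos, if_neg,
    not_false_iff] at h2
  exact absurd (ex_mono hu (show i1 u v ≤ i1 u v + 1 by omega)) (by omega)

end mono

section inv
variable {b a : Fin (K + 1) → Fin (n + 1)} {u : Fin (K + 2) → Fin (n + 1)}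
  {v : Fin K → Fin (n + 1)}

lemma i1_fwd (hb : Monotone b) (ha : Monotone a)
    (hc : ∃ i : Fin (K + 1), (a i : ℕ) ≤ b i) :
    i1 (fwd b a).1 (fwd b a).2 = i0 b a := by
  have hex : ∃ j, (j < K ∧ ex (fwd b a).1 j ≤ ex (fwd b a).2 j) ∨ j = K := ⟨K, Or.inr rfl⟩
  rw [i1_eq _ _ hex, Nat.find_eq_iff]
  have ht := i0_le hc
  constructor
  · rcases Nat.lt_or_ge (i0 b a) K with h | h
    · left
      refine ⟨h, ?_⟩
      rw [ex_eq _ (show i0 b a < K + 2 by omega), ex_eq _ (show i0 b a < K by omega)]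
      simp only [fwd, le_refl, if_true, lt_self_iff_false, if_false]
      exact ex_mono ha (by omega)
    · right; omega
  · rintro j hj h
    rcases h with ⟨hjK, hle⟩ | rfl
    · rw [ex_eq _ (show j < K + 2 by omega), ex_eq _ (show j < K by omega)] at hle
      simp only [fwd] at hle
      rw [if_pos (by first | omega | (simp; omega)), if_pos (by first | omega | (simp; omega))] at hle
      exact absurd hle (by have := i0_min hc hj; omega)
    · omega

lemma bwd_fwd (hb : Monotone b) (ha : Monotone a)
    (hc : ∃ i : Fin (K + 1), (a i : ℕ) ≤ b i) :
    bwd (fwd b a).1 (fwd b a).2 = (b, a) := by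
  have hi := i1_fwd hb ha hc
  have ht := i0_le hc
  refine Prod.ext ?_ ?_ <;> funext j <;> apply Fin.ext <;> simp only [bwd, hi]
  · by_cases hj : (j : ℕ) < i0 b a
    · rw [if_pos hj, ex_eq _ (show (j : ℕ) < K by omega)]
      simp only [fwd]
      rw [if_pos (by first | omega | (simp; omega))]
      exact ex_fin b j
    · rw [if_neg hj, ex_eq _ (show (j : ℕ) + 1 < K + 2 by omega)]
      simp only [fwd]
      rw [if_neg (by first | omega | (simp; omega))]
      rw [show (j : ℕ) + 1 - 1 = (j : ℕ) from rfl]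
      exact ex_fin b j
  · by_cases hj : (j : ℕ) ≤ i0 b a
    · rw [if_pos hj, ex_eq _ (show (j : ℕ) < K + 2 by omega)]
      simp only [fwd]
      rw [if_pos (by first | omega | (simp; omega))]
      exact ex_fin a j
    · rw [if_neg hj, ex_eq _ (show (j : ℕ) - 1 < K by omega)]
      simp only [fwd]
      rw [if_neg (by first | omega | (simp; omega))]
      rw [show (j : ℕ) - 1 + 1 = (j : ℕ) from by omega]
      exact ex_fin a j

lemma i0_bwd (hu : Monotone u) (hv : Monotone v) :
    i0 (bwd u v).1 (bwd u v).2 = i1 u v := by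
  have hex : ∃ j, (j < K + 1 ∧ ex (bwd u v).2 j ≤ ex (bwd u v).1 j) ∨ j = K + 1 :=
    ⟨K + 1, Or.inr rfl⟩
  rw [i0_eq _ _ hex, Nat.find_eq_iff]
  have hs := i1_le u v
  constructor
  · left
    refine ⟨by omega, ?_⟩
    rw [ex_eq _ (show i1 u v < K + 1 by omega), ex_eq _ (show i1 u v < K + 1 by omega)]
    simp only [bwd, le_refl, if_true, lt_self_iff_false, if_false]
    exact ex_mono hu (by omega)
  · rintro j hj h
    rcases h with ⟨hjK, hle⟩ | rfl
    · rw [ex_eq _ (show j < K + 1 by omega), ex_eq _ (show j < K + 1 by omega)] at hle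
      simp only [bwd] at hle
      rw [if_pos (by first | omega | (simp; omega)), if_pos (by first | omega | (simp; omega))] at hle
      exact absurd hle (by have := i1_min hj; omega)
    · omega

lemma fwd_bwd (hu : Monotone u) (hv : Monotone v) :
    fwd (bwd u v).1 (bwd u v).2 = (u, v) := by
  have hi := i0_bwd hu hv
  have hs := i1_le u v
  refine Prod.ext ?_ ?_ <;> funext j <;> apply Fin.ext <;> simp only [fwd, hi]
  · by_cases hj : (j : ℕ) ≤ i1 u v
    · rw [if_pos hj, ex_eq _ (show (j : ℕ) < K + 1 by omega)]
      simp only [bwd]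
      rw [if_pos (by first | omega | (simp; omega))]
      exact ex_fin u j
    · rw [if_neg hj, ex_eq _ (show (j : ℕ) - 1 < K + 1 by omega)]
      simp only [bwd]
      rw [if_neg (by first | omega | (simp; omega))]
      rw [show (j : ℕ) - 1 + 1 = (j : ℕ) from by omega]
      exact ex_fin u j
  · by_cases hj : (j : ℕ) < i1 u v
    · rw [if_pos hj, ex_eq _ (show (j : ℕ) < K + 1 by omega)]
      simp only [bwd]
      rw [if_pos (by first | omega | (simp; omega))]
      exact ex_fin v j
    · rw [if_neg hj, ex_eq _ (show (j : ℕ) + 1 < K + 1 by omega)]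
      simp only [bwd]
      rw [if_neg (by first | omega | (simp; omega))]
      rw [show (j : ℕ) + 1 - 1 = (j : ℕ) from rfl]
      exact ex_fin v j

end inv

def badEquiv (K n : ℕ) :
    {p : (Fin (K + 1) → Fin (n + 1)) × (Fin (K + 1) → Fin (n + 1)) //
        Monotone p.1 ∧ Monotone p.2 ∧ ¬ ∀ i, p.1 i < p.2 i} ≃
      {u : Fin (K + 2) → Fin (n + 1) // Monotone u} ×
        {v : Fin K → Fin (n + 1) // Monotone v} where
  toFun x :=
    (⟨(fwd x.1.1 x.1.2).1, fwd1_mono x.2.1 x.2.2.1 (hcross_of x.2.2.2)⟩,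
     ⟨(fwd x.1.1 x.1.2).2, fwd2_mono x.2.1 x.2.2.1 (hcross_of x.2.2.2)⟩)
  invFun y :=
    ⟨bwd y.1.1 y.2.1, bwd1_mono y.1.2 y.2.2, bwd2_mono y.1.2 y.2.2, bwd_cross y.1.2⟩
  left_inv x := by
    apply Subtype.ext
    exact bwd_fwd x.2.1 x.2.2.1 (hcross_of x.2.2.2)
  right_inv y := by
    have h := fwd_bwd y.1.2 y.2.2
    exact Prod.ext (Subtype.ext (congrArg Prod.fst h)) (Subtype.ext (congrArg Prod.snd h))

/-- The number of parallelogram polyominoes of width `k+1` and height `n`,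
encoded as pairs `(b, a)` of weakly increasing functions `Fin k → Fin (n+1)`
with `b i < a i`, equals the 2×2 Lindström–Gessel–Viennot determinant
`C(n+k, k)² − C(n+k+1, k+1) · C(n+k-1, k-1)`. -/
theorem stmt1 (k n : ℕ) (hk : 1 ≤ k) (hn : 1 ≤ n) :
    (Nat.card {p : (Fin k → Fin (n + 1)) × (Fin k → Fin (n + 1)) //
        Monotone p.1 ∧ Monotone p.2 ∧ ∀ i, p.1 i < p.2 i} : ℤ) =
      (Nat.choose (n + k) k : ℤ) ^ 2 -
        (Nat.choose (n + k + 1) (k + 1) : ℤ) * (Nat.choose (n + k - 1) (k - 1) : ℤ) := by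
  obtain ⟨K, rfl⟩ : ∃ K, k = K + 1 := ⟨k - 1, by omega⟩
  classical
  set α := (Fin (K + 1) → Fin (n + 1)) × (Fin (K + 1) → Fin (n + 1)) with hα
  have esum : {p : α // Monotone p.1 ∧ Monotone p.2} ≃
      {p : α // Monotone p.1 ∧ Monotone p.2 ∧ (∀ i, p.1 i < p.2 i)} ⊕
      {p : α // Monotone p.1 ∧ Monotone p.2 ∧ ¬(∀ i, p.1 i < p.2 i)} := by
    refine (Equiv.sumCompl (fun x : {p : α // Monotone p.1 ∧ Monotone p.2} =>
      ∀ i, x.1.1 i < x.1.2 i)).symm.trans (Equiv.sumCongr ?_ ?_)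
    · exact (Equiv.subtypeSubtypeEquivSubtypeInter
          (fun p : α => Monotone p.1 ∧ Monotone p.2)
          (fun p => ∀ i, p.1 i < p.2 i)).trans
        (Equiv.subtypeEquivRight fun p => by tauto)
    · exact (Equiv.subtypeSubtypeEquivSubtypeInter
          (fun p : α => Monotone p.1 ∧ Monotone p.2)
          (fun p => ¬∀ i, p.1 i < p.2 i)).trans
        (Equiv.subtypeEquivRight fun p => by tauto)
  have hT : Nat.card {p : α // Monotone p.1 ∧ Monotone p.2}
      = (n + (K + 1)).choose (K + 1) * (n + (K + 1)).choose (K + 1) := by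
    rw [Nat.card_congr (Equiv.subtypeProdEquivProd), Nat.card_prod, card_mono]
  have hB : Nat.card {p : α // Monotone p.1 ∧ Monotone p.2 ∧ ¬(∀ i, p.1 i < p.2 i)}
      = (n + (K + 2)).choose (K + 2) * (n + K).choose K := by
    rw [Nat.card_congr (badEquiv K n), Nat.card_prod, card_mono, card_mono]
  have hsum := Nat.card_congr esum
  rw [Nat.card_sum, hT, hB] at hsum
  have key : (Nat.card {p : α // Monotone p.1 ∧ Monotone p.2 ∧ (∀ i, p.1 i < p.2 i)} : ℤ)
      = ((n + (K + 1)).choose (K + 1) : ℤ) ^ 2 -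
        ((n + (K + 2)).choose (K + 2) : ℤ) * ((n + K).choose K : ℤ) := by
    have := congrArg (fun x : ℕ => (x : ℤ)) hsum
    push_cast at this
    ring_nf
    ring_nf at this
    linarith
  rw [show n + (K + 1) + 1 = n + (K + 2) from by omega,
    show n + (K + 1) - 1 = n + K from by omega,
    show K + 1 + 1 = K + 2 from rfl, show K + 1 - 1 = K from rfl]
  exact key
end

section
/- For all natural numbers k ≥ 1 and n ≥ 1, the binomial coefficients satisfy (k+1) · ( C(n+k, k)² − C(n+k+1, k+1) · C(n+k-1, k-1) ) = C(n+k, k) · C(n+k-1, k). -/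
/-- The binomial identity equating the 2×2 LGV determinant with the closed
product formula for the number of parallelogram polyominoes of width `k+1`
and height `n`. -/
theorem stmt2 (k n : ℕ) (hk : 1 ≤ k) (hn : 1 ≤ n) :
    ((k : ℤ) + 1) * ((Nat.choose (n + k) k : ℤ) ^ 2 -
        (Nat.choose (n + k + 1) (k + 1) : ℤ) * (Nat.choose (n + k - 1) (k - 1) : ℤ)) =
      (Nat.choose (n + k) k : ℤ) * (Nat.choose (n + k - 1) k : ℤ) := by
  obtain ⟨k, rfl⟩ : ∃ m, k = m + 1 := ⟨k - 1, (Nat.succ_pred_eq_of_pos hk).symm⟩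
  obtain ⟨n, rfl⟩ : ∃ m, n = m + 1 := ⟨n - 1, (Nat.succ_pred_eq_of_pos hn).symm⟩
  have e1 : n + 1 + (k + 1) - 1 = n + k + 1 := by omega
  have e2 : k + 1 - 1 = k := by omega
  have e3 : n + 1 + (k + 1) = n + k + 2 := by omega
  have e4 : n + 1 + (k + 1) + 1 = n + k + 3 := by omega
  rw [e1, e2, e3]
  have h1 : ((n:ℤ) + k + 3) * (Nat.choose (n + k + 2) (k + 1)) =
      (Nat.choose (n + k + 2 + 1) (k + 1 + 1)) * ((k:ℤ) + 2) := by
    exact_mod_cast congrArg (Nat.cast : ℕ → ℤ) (Nat.add_one_mul_choose_eq (n + k + 2) (k + 1))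
  have h2 : ((n:ℤ) + k + 2) * (Nat.choose (n + k + 1) k) =
      (Nat.choose (n + k + 2) (k + 1)) * ((k:ℤ) + 1) := by
    exact_mod_cast congrArg (Nat.cast : ℕ → ℤ) (Nat.add_one_mul_choose_eq (n + k + 1) k)
  have h3 : (Nat.choose (n + k + 1) (k + 1) : ℤ) * ((n:ℤ) + k + 2) =
      (Nat.choose (n + k + 2) (k + 1)) * ((n:ℤ) + 1) := by
    have := congrArg (Nat.cast : ℕ → ℤ) (Nat.choose_mul_succ_eq (n + k + 1) (k + 1))
    push_cast [show n + k + 1 + 1 - (k + 1) = n + 1 by omega] at this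
    linarith
  have hne : ((k:ℤ) + 2) * ((n:ℤ) + k + 2) ≠ 0 := by positivity
  apply mul_left_cancel₀ hne
  push_cast
  linear_combination (((k:ℤ) + 2) * ((n:ℤ) + k + 2) * (Nat.choose (n + k + 1) k : ℤ)) * h1 +
    (-((k:ℤ) + 2) * ((n:ℤ) + k + 3) * (Nat.choose (n + k + 2) (k + 1) : ℤ)) * h2 +
    (-((k:ℤ) + 2) * (Nat.choose (n + k + 2) (k + 1) : ℤ)) * h3
end

section
/- Fix natural numbers k ≥ 1 and n ≥ 1. Let L be the set of pairs (g, d) where g : Fin n → Fin k is an arbitrary function, d : Fin (k-1) → Fin (n+1) is weakly increasing (monotone), and for every i : Fin (k-1) one has (d i : ℕ) < card { m : Fin n | (g m : ℕ) ≤ (i : ℕ) }. Then |L| = k^(n-1) · C(n+k-2, k-1). -/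
open Finset

namespace Stmt3Aux

/-! ### Counting residues below a bound -/

/-- number of `y < x` with `y % k = a` -/
def resCount (k a x : ℕ) : ℕ := ((Finset.range x).filter (fun y => y % k = a)).card

lemma residue_unique {k x y z : ℕ} (hk : 0 < k) (hy : x ≤ y) (hy2 : y < x + k)
    (hz : x ≤ z) (hz2 : z < x + k) (h : y % k = z % k) : y = z := by
  rcases le_total y z with hle | hle
  · have hdvd : k ∣ z - y := (Nat.modEq_iff_dvd' hle).mp h
    have := Nat.eq_zero_of_dvd_of_lt hdvd (show z - y < k by omega)
    omega
  · have hdvd : k ∣ y - z := (Nat.modEq_iff_dvd' hle).mp h.symm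
    have := Nat.eq_zero_of_dvd_of_lt hdvd (show y - z < k by omega)
    omega

lemma offset_mod {k a x : ℕ} (ha : a < k) : (x + (a + k - x % k) % k) % k = a := by
  have h1 : (x + (a + k - x % k) % k) % k = (x + (a + k - x % k)) % k :=
    Nat.ModEq.add_left x (Nat.mod_modEq _ k)
  have hb : x % k < k := Nat.mod_lt _ (by omega)
  have h3 := Nat.mod_add_div x k
  have h2 : x + (a + k - x % k) = k * (x / k) + (a + k) := by omega
  rw [h1, h2, Nat.mul_add_mod, Nat.add_mod_right, Nat.mod_eq_of_lt ha]

lemma window_filter_eq {k a : ℕ} (ha : a < k) (x : ℕ) :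
    (Finset.Ico x (x + k)).filter (fun y => y % k = a) = {x + (a + k - x % k) % k} := by
  have hk : 0 < k := by omega
  have hoff : (a + k - x % k) % k < k := Nat.mod_lt _ hk
  ext y
  simp only [Finset.mem_filter, Finset.mem_Ico, Finset.mem_singleton]
  constructor
  · rintro ⟨⟨h1, h2⟩, h3⟩
    exact residue_unique hk h1 h2 (Nat.le_add_right _ _) (by omega)
      (h3.trans (offset_mod ha).symm)
  · rintro rfl
    exact ⟨⟨Nat.le_add_right _ _, by omega⟩, offset_mod ha⟩

lemma range_split (x c : ℕ) :
    Finset.range (x + c) = Finset.range x ∪ Finset.Ico x (x + c) := by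
  rw [Finset.range_eq_Ico, Finset.range_eq_Ico]
  exact (Finset.Ico_union_Ico_eq_Ico (Nat.zero_le x) (Nat.le_add_right x c)).symm

lemma range_split_disj (x c : ℕ) :
    Disjoint (Finset.range x) (Finset.Ico x (x + c)) := by
  rw [Finset.range_eq_Ico]
  exact Finset.Ico_disjoint_Ico_consecutive 0 x (x + c)

lemma resCount_add {k a : ℕ} (ha : a < k) (x : ℕ) :
    resCount k a (x + k) = resCount k a x + 1 := by
  rw [resCount, range_split x k, Finset.filter_union,
    Finset.card_union_of_disjoint (Finset.disjoint_filter_filter (range_split_disj x k)),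
    window_filter_eq ha, Finset.card_singleton]
  rfl

lemma resCount_window {k a t : ℕ} (ha : a < k) (ht : t < k) (j : ℕ) (hj : j + 1 ≤ k) :
    resCount k a (t + (j + 1)) =
      resCount k a t + (if (a + (k - t)) % k ≤ j then 1 else 0) := by
  have hk : 0 < k := by omega
  have htmod : t % k = t := Nat.mod_eq_of_lt ht
  have hoffeq : (a + k - t % k) % k = (a + (k - t)) % k := by
    rw [htmod]; congr 1; omega
  set o := (a + (k - t)) % k with ho
  have hok : o < k := Nat.mod_lt _ hk
  have hbig := window_filter_eq ha t
  rw [hoffeq] at hbig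
  have hfilter : (Finset.Ico t (t + (j + 1))).filter (fun y => y % k = a) =
      if o ≤ j then {t + o} else ∅ := by
    split_ifs with hoj
    · ext y
      simp only [Finset.mem_filter, Finset.mem_Ico, Finset.mem_singleton]
      constructor
      · rintro ⟨⟨h1, h2⟩, h3⟩
        have hmem : y ∈ (Finset.Ico t (t + k)).filter (fun y => y % k = a) := by
          simp only [Finset.mem_filter, Finset.mem_Ico]
          exact ⟨⟨h1, by omega⟩, h3⟩
        rw [hbig, Finset.mem_singleton] at hmem
        exact hmem
      · rintro rfl
        refine ⟨⟨Nat.le_add_right _ _, by omega⟩, ?_⟩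
        have hm : t + o ∈ (Finset.Ico t (t + k)).filter (fun y => y % k = a) := by
          rw [hbig]; exact Finset.mem_singleton_self _
        exact (Finset.mem_filter.mp hm).2
    · ext y
      simp only [Finset.mem_filter, Finset.mem_Ico, Finset.notMem_empty, iff_false, not_and]
      rintro ⟨h1, h2⟩ h3
      have hmem : y ∈ (Finset.Ico t (t + k)).filter (fun y => y % k = a) := by
        simp only [Finset.mem_filter, Finset.mem_Ico]
        exact ⟨⟨h1, by omega⟩, h3⟩
      rw [hbig, Finset.mem_singleton] at hmem
      omega
  rw [resCount, range_split t (j + 1), Finset.filter_union,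
    Finset.card_union_of_disjoint (Finset.disjoint_filter_filter (range_split_disj t (j + 1))),
    hfilter]
  split_ifs with hoj <;> simp [resCount]

/-! ### Multiset sum helpers -/

lemma sum_map_add_split {α : Type*} (M : Multiset α) (f h : α → ℤ) :
    (M.map (fun x => f x + h x)).sum = (M.map f).sum + (M.map h).sum := by
  induction M using Multiset.induction_on with
  | empty => simp
  | cons a s ih => simp [ih]; ring

lemma sum_map_ite {α : Type*} (M : Multiset α) (p : α → Prop) [DecidablePred p] :
    (M.map (fun x => if p x then (1 : ℤ) else 0)).sum = (M.countP p : ℤ) := by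
  induction M using Multiset.induction_on with
  | empty => simp
  | cons a s ih =>
    by_cases h : p a <;> simp [Multiset.countP_cons, h, ih] <;> push_cast <;> ring

lemma sum_map_const_one {α : Type*} (M : Multiset α) :
    (M.map (fun _ => (1 : ℤ))).sum = (Multiset.card M : ℤ) := by
  induction M using Multiset.induction_on with
  | empty => simp
  | cons a s ih => simp [ih]; push_cast; ring

lemma countP_mono_pred {α : Type*} (M : Multiset α) (p q : α → Prop)
    [DecidablePred p] [DecidablePred q] (h : ∀ x, p x → q x) :
    M.countP p ≤ M.countP q := by
  induction M using Multiset.induction_on with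
  | empty => simp
  | cons a s ih =>
    rw [Multiset.countP_cons, Multiset.countP_cons]
    by_cases hpa : p a
    · simp only [hpa, h a hpa, if_true]
      omega
    · split_ifs <;> omega

/-! ### The cycle lemma -/

lemma cycle_exu (k : ℕ) (hk : 0 < k) (P : ℕ → ℤ) (hP : ∀ x, P (x + k) = P x + 1) :
    ∃! t : ℕ, t < k ∧ ∀ x, t < x → x ≤ t + k → P t < P x := by
  obtain ⟨t0, ht0mem, ht0min⟩ :=
    Finset.exists_min_image (Finset.range k) P ⟨0, Finset.mem_range.mpr hk⟩
  set s : Finset ℕ := (Finset.range k).filter (fun u => P u ≤ P t0) with hs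
  have hsne : s.Nonempty := ⟨t0, by simp [hs, ht0mem]⟩
  set t := s.max' hsne with htdef
  have htmem : t ∈ s := s.max'_mem hsne
  have htk : t < k := Finset.mem_range.mp (Finset.mem_filter.mp htmem).1
  have htle : P t ≤ P t0 := (Finset.mem_filter.mp htmem).2
  have hmin : ∀ u, u < k → P t ≤ P u := fun u hu =>
    htle.trans (ht0min u (Finset.mem_range.mpr hu))
  have hmax : ∀ u, u < k → P u ≤ P t → u ≤ t := by
    intro u hu hPu
    exact s.le_max' u (Finset.mem_filter.mpr ⟨Finset.mem_range.mpr hu, hPu.trans htle⟩)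
  have hwin : ∀ x, t < x → x ≤ t + k → P t < P x := by
    intro x hx1 hx2
    by_cases hxk : x < k
    · rcases lt_or_eq_of_le (hmin x hxk) with h | h
      · exact h
      · exact absurd (hmax x hxk h.ge) (by omega)
    · have hx' : x - k < k := by omega
      have hPx : P x = P (x - k) + 1 := by
        rw [← hP (x - k)]; congr 1; omega
      have := hmin (x - k) hx'
      omega
  refine ⟨t, ⟨htk, hwin⟩, ?_⟩
  rintro t' ⟨ht'k, ht'w⟩
  by_contra hne
  rcases lt_or_gt_of_ne hne with hlt | hlt
  · -- t' < t
    have h1 : P t' < P t := ht'w t (by omega) (by omega)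
    have h2 : P t < P (t' + k) := hwin (t' + k) (by omega) (by omega)
    rw [hP t'] at h2
    omega
  · -- t < t'
    have h1 : P t < P t' := hwin t' (by omega) (by omega)
    have h2 : P t' < P (t + k) := ht'w (t + k) (by omega) (by omega)
    rw [hP t] at h2
    omega

/-! ### Setting: width K+1, height N+1 -/

variable {K N : ℕ}

/-- The validity condition for a pair (g, M). -/
def Cond (g : Fin (N + 1) → Fin (K + 1)) (M : Multiset (Fin (K + 1))) : Prop :=
  ∀ i : Fin K, M.countP (fun x : Fin (K + 1) => (x : ℕ) ≤ (i : ℕ)) <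
    (Finset.univ.filter fun m : Fin (N + 1) => (g m : ℕ) ≤ (i : ℕ)).card

/-- The path-difference function. -/
def Pfun (g : Fin (N + 1) → Fin (K + 1)) (M : Multiset (Fin (K + 1))) (x : ℕ) : ℤ :=
  (∑ m : Fin (N + 1), (resCount (K + 1) (g m : ℕ) x : ℤ)) -
    (M.map (fun r : Fin (K + 1) => (resCount (K + 1) (r : ℕ) x : ℤ))).sum

lemma Pfun_add (g : Fin (N + 1) → Fin (K + 1)) (M : Multiset (Fin (K + 1)))
    (hM : Multiset.card M = N) (x : ℕ) : Pfun g M (x + (K + 1)) = Pfun g M x + 1 := by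
  unfold Pfun
  have hg : (∑ m : Fin (N + 1), (resCount (K + 1) (g m : ℕ) (x + (K + 1)) : ℤ)) =
      (∑ m : Fin (N + 1), ((resCount (K + 1) (g m : ℕ) x : ℤ) + 1)) :=
    Finset.sum_congr rfl (fun m _ => by
      rw [resCount_add (g m).isLt x]; push_cast; ring)
  have hcongr : M.map (fun r : Fin (K + 1) => (resCount (K + 1) (r : ℕ) (x + (K + 1)) : ℤ)) =
      M.map (fun r : Fin (K + 1) => (resCount (K + 1) (r : ℕ) x : ℤ) + 1) :=
    Multiset.map_congr rfl (fun r _ => by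
      rw [resCount_add r.isLt x]; push_cast; ring)
  rw [hg, hcongr, Finset.sum_add_distrib, sum_map_add_split, sum_map_const_one, hM]
  simp
  ring

lemma Pfun_step (g : Fin (N + 1) → Fin (K + 1)) (M : Multiset (Fin (K + 1)))
    (t : Fin (K + 1)) (i : Fin K) :
    Pfun g M ((t : ℕ) + ((i : ℕ) + 1)) = Pfun g M (t : ℕ)
      + ((Finset.univ.filter fun m : Fin (N + 1) =>
            ((g m - t : Fin (K + 1)) : ℕ) ≤ (i : ℕ)).card : ℤ)
      - (M.countP (fun x : Fin (K + 1) => ((x - t : Fin (K + 1)) : ℕ) ≤ (i : ℕ)) : ℤ) := by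
  have hstepv : ∀ a : Fin (K + 1), resCount (K + 1) (a : ℕ) ((t : ℕ) + ((i : ℕ) + 1)) =
      resCount (K + 1) (a : ℕ) (t : ℕ) +
        (if ((a - t : Fin (K + 1)) : ℕ) ≤ (i : ℕ) then 1 else 0) := by
    intro a
    have hsub : ((a - t : Fin (K + 1)) : ℕ) = ((a : ℕ) + ((K + 1) - (t : ℕ))) % (K + 1) := by
      rw [Fin.sub_def]
      simp [Nat.add_comm]
    rw [hsub]
    exact resCount_window a.isLt t.isLt (i : ℕ) (by omega)
  have hg : (∑ m : Fin (N + 1), (resCount (K + 1) (g m : ℕ) ((t : ℕ) + ((i : ℕ) + 1)) : ℤ)) =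
      (∑ m : Fin (N + 1), (resCount (K + 1) (g m : ℕ) (t : ℕ) : ℤ))
        + ((Finset.univ.filter fun m : Fin (N + 1) =>
            ((g m - t : Fin (K + 1)) : ℕ) ≤ (i : ℕ)).card : ℤ) := by
    rw [Finset.card_filter]
    push_cast
    rw [← Finset.sum_add_distrib]
    apply Finset.sum_congr rfl
    intro m _
    rw [hstepv (g m)]
    split_ifs <;> push_cast <;> ring
  have hM : (M.map (fun r : Fin (K + 1) => (resCount (K + 1) (r : ℕ) ((t : ℕ) + ((i : ℕ) + 1)) : ℤ))).sum =
      (M.map (fun r : Fin (K + 1) => (resCount (K + 1) (r : ℕ) (t : ℕ) : ℤ))).sum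
        + (M.countP (fun x : Fin (K + 1) => ((x - t : Fin (K + 1)) : ℕ) ≤ (i : ℕ)) : ℤ) := by
    have hc : M.map (fun r : Fin (K + 1) => (resCount (K + 1) (r : ℕ) ((t : ℕ) + ((i : ℕ) + 1)) : ℤ)) =
        M.map (fun r : Fin (K + 1) => (resCount (K + 1) (r : ℕ) (t : ℕ) : ℤ) +
          (if ((r - t : Fin (K + 1)) : ℕ) ≤ (i : ℕ) then (1 : ℤ) else 0)) :=
      Multiset.map_congr rfl (fun r _ => by
        rw [hstepv r]; split_ifs <;> push_cast <;> ring)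
    rw [hc, sum_map_add_split, sum_map_ite]
  unfold Pfun
  rw [hg, hM]
  ring

lemma cond_iff_window (g : Fin (N + 1) → Fin (K + 1)) (M : Multiset (Fin (K + 1)))
    (hM : Multiset.card M = N) (t : Fin (K + 1)) :
    Cond (fun m => g m - t) (M.map (fun x => x - t)) ↔
      ∀ x : ℕ, (t : ℕ) < x → x ≤ (t : ℕ) + (K + 1) → Pfun g M (t : ℕ) < Pfun g M x := by
  have hstep : ∀ i : Fin K,
      ((M.map (fun x => x - t)).countP (fun x : Fin (K + 1) => (x : ℕ) ≤ (i : ℕ)) <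
        (Finset.univ.filter fun m : Fin (N + 1) =>
          ((g m - t : Fin (K + 1)) : ℕ) ≤ (i : ℕ)).card)
        ↔ Pfun g M (t : ℕ) < Pfun g M ((t : ℕ) + ((i : ℕ) + 1)) := by
    intro i
    have hmap : (M.map (fun x => x - t)).countP (fun x : Fin (K + 1) => (x : ℕ) ≤ (i : ℕ)) =
        M.countP (fun x : Fin (K + 1) => ((x - t : Fin (K + 1)) : ℕ) ≤ (i : ℕ)) := by
      rw [Multiset.countP_map, Multiset.countP_eq_card_filter]
    rw [hmap, Pfun_step g M t i]
    constructor
    · intro h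
      have h' : (M.countP (fun x : Fin (K + 1) => ((x - t : Fin (K + 1)) : ℕ) ≤ (i : ℕ)) : ℤ) <
          ((Finset.univ.filter fun m : Fin (N + 1) =>
            ((g m - t : Fin (K + 1)) : ℕ) ≤ (i : ℕ)).card : ℤ) := by exact_mod_cast h
      linarith
    · intro h
      have h' : (M.countP (fun x : Fin (K + 1) => ((x - t : Fin (K + 1)) : ℕ) ≤ (i : ℕ)) : ℤ) <
          ((Finset.univ.filter fun m : Fin (N + 1) =>
            ((g m - t : Fin (K + 1)) : ℕ) ≤ (i : ℕ)).card : ℤ) := by linarith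
      exact_mod_cast h'
  constructor
  · intro hc x hx1 hx2
    by_cases hxe : x = (t : ℕ) + (K + 1)
    · rw [hxe, Pfun_add g M hM]
      exact lt_add_one _
    · have hj : x - (t : ℕ) - 1 < K := by omega
      have h := (hstep ⟨x - (t : ℕ) - 1, hj⟩).mp (hc ⟨x - (t : ℕ) - 1, hj⟩)
      have hx' : (t : ℕ) + ((x - (t : ℕ) - 1) + 1) = x := by omega
      rwa [hx'] at h
  · intro hw i
    exact (hstep i).mpr (hw ((t : ℕ) + ((i : ℕ) + 1)) (by omega)
      (by have := i.isLt; omega))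

lemma exists_unique_shift (g : Fin (N + 1) → Fin (K + 1)) (M : Multiset (Fin (K + 1)))
    (hM : Multiset.card M = N) :
    ∃! t : Fin (K + 1), Cond (fun m => g m - t) (M.map (fun x => x - t)) := by
  obtain ⟨t, ⟨htk, htw⟩, huniq⟩ := cycle_exu (K + 1) (by omega) (Pfun g M) (Pfun_add g M hM)
  refine ⟨⟨t, htk⟩, ?_, ?_⟩
  · exact (cond_iff_window g M hM ⟨t, htk⟩).mpr htw
  · intro t' h'
    have hw := (cond_iff_window g M hM t').mp h'
    exact Fin.ext (huniq (t' : ℕ) ⟨t'.isLt, hw⟩)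

/-! ### Conjugation: monotone sequences vs multisets -/

lemma lemA {d : Fin K → Fin (N + 2)} (hd : Monotone d) (i : Fin K) (r : ℕ) :
    ((Finset.univ.filter fun i' : Fin K => (d i' : ℕ) ≤ r).card ≤ (i : ℕ)) ↔
      r < (d i : ℕ) := by
  constructor
  · intro h
    by_contra h'
    push_neg at h'
    have hsub : Finset.Iic i ⊆ Finset.univ.filter fun i' : Fin K => (d i' : ℕ) ≤ r := by
      intro i' hi'
      simp only [Finset.mem_filter, Finset.mem_univ, true_and]
      have : (d i' : ℕ) ≤ (d i : ℕ) := hd (Finset.mem_Iic.mp hi')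
      omega
    have := Finset.card_le_card hsub
    rw [Fin.card_Iic] at this
    omega
  · intro h
    have hsub : (Finset.univ.filter fun i' : Fin K => (d i' : ℕ) ≤ r) ⊆ Finset.Iio i := by
      intro i' hi'
      simp only [Finset.mem_filter, Finset.mem_univ, true_and] at hi'
      rw [Finset.mem_Iio]
      by_contra hle
      push_neg at hle
      have : (d i : ℕ) ≤ (d i' : ℕ) := hd hle
      omega
    have := Finset.card_le_card hsub
    rwa [Fin.card_Iio] at this

lemma card_filter_lt (c : ℕ) (hc : c ≤ N) :
    (Finset.univ.filter fun r : Fin N => (r : ℕ) < c).card = c := by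
  rcases eq_or_lt_of_le hc with heq | hlt
  · have he : (Finset.univ.filter fun r : Fin N => (r : ℕ) < c) = Finset.univ :=
      Finset.filter_true_of_mem (fun r _ => by have := r.isLt; omega)
    rw [he, Finset.card_univ, Fintype.card_fin, heq]
  · have he : (Finset.univ.filter fun r : Fin N => (r : ℕ) < c) = Finset.Iio ⟨c, hlt⟩ := by
      ext r
      simp [Fin.lt_def]
    rw [he, Fin.card_Iio]

/-- column of the `r`-th north step of the conjugate lower path -/
def wOf (d : Fin K → Fin (N + 2)) (r : Fin N) : Fin (K + 1) :=
  ⟨(Finset.univ.filter fun i' : Fin K => (d i' : ℕ) ≤ (r : ℕ)).card, by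
    have h1 : (Finset.univ.filter fun i' : Fin K => (d i' : ℕ) ≤ (r : ℕ)).card ≤
        (Finset.univ : Finset (Fin K)).card := Finset.card_filter_le _ _
    simp only [Finset.card_univ, Fintype.card_fin] at h1
    omega⟩

/-- the multiset encoding of the lower path -/
def Mof (d : Fin K → Fin (N + 2)) : Multiset (Fin (K + 1)) :=
  (Finset.univ : Finset (Fin N)).val.map (wOf d)

lemma Mof_card (d : Fin K → Fin (N + 2)) : Multiset.card (Mof d) = N := by
  simp [Mof]

lemma countP_Mof {d : Fin K → Fin (N + 2)} (hd : Monotone d) (i : Fin K)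
    (hb : (d i : ℕ) ≤ N) :
    (Mof d).countP (fun x : Fin (K + 1) => (x : ℕ) ≤ (i : ℕ)) = (d i : ℕ) := by
  rw [Mof, Multiset.countP_map]
  have h2 : Multiset.card (Multiset.filter
        (fun r : Fin N => ((wOf d r : Fin (K + 1)) : ℕ) ≤ (i : ℕ))
        (Finset.univ : Finset (Fin N)).val)
      = (Finset.univ.filter (fun r : Fin N => ((wOf d r : Fin (K + 1)) : ℕ) ≤ (i : ℕ))).card :=
    rfl
  rw [h2]
  have h3 : (Finset.univ.filter (fun r : Fin N => ((wOf d r : Fin (K + 1)) : ℕ) ≤ (i : ℕ))) =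
      (Finset.univ.filter fun r : Fin N => (r : ℕ) < (d i : ℕ)) := by
    apply Finset.filter_congr
    intro r _
    exact lemA hd i (r : ℕ)
  rw [h3, card_filter_lt _ hb]

/-! ### Multisets are determined by cumulative counts -/

lemma countP_le_succ (A : Multiset (Fin (K + 1))) (j : ℕ) :
    A.countP (fun x : Fin (K + 1) => (x : ℕ) ≤ j + 1) =
      A.countP (fun x : Fin (K + 1) => (x : ℕ) ≤ j) + A.countP (fun x : Fin (K + 1) => (x : ℕ) = j + 1) := by
  induction A using Multiset.induction_on with
  | empty => simp
  | cons a s ih =>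
    simp only [Multiset.countP_cons, ih]
    split_ifs <;> omega

lemma countP_eq_count (A : Multiset (Fin (K + 1))) (a : Fin (K + 1)) :
    A.countP (fun x : Fin (K + 1) => (x : ℕ) = (a : ℕ)) = A.count a := by
  induction A using Multiset.induction_on with
  | empty => simp
  | cons b s ih =>
    rw [Multiset.countP_cons, Multiset.count_cons, ih]
    by_cases h : b = a
    · subst h; simp
    · have h2 : ¬((b : ℕ) = (a : ℕ)) := fun hh => h (Fin.ext hh)
      have h3 : ¬(a = b) := fun hh => h hh.symm
      simp [h2, h3]

lemma multiset_eq_of_cumul {A B : Multiset (Fin (K + 1))}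
    (hcard : Multiset.card A = Multiset.card B)
    (h : ∀ i : Fin K, A.countP (fun x : Fin (K + 1) => (x : ℕ) ≤ (i : ℕ)) =
      B.countP (fun x : Fin (K + 1) => (x : ℕ) ≤ (i : ℕ))) : A = B := by
  have hall : ∀ j : ℕ, A.countP (fun x : Fin (K + 1) => (x : ℕ) ≤ j) = B.countP (fun x : Fin (K + 1) => (x : ℕ) ≤ j) := by
    intro j
    rcases lt_or_ge j K with hj | hj
    · exact h ⟨j, hj⟩
    · have hA : A.countP (fun x : Fin (K + 1) => (x : ℕ) ≤ j) = Multiset.card A :=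
        Multiset.countP_eq_card.mpr (fun x _ => by have := x.isLt; omega)
      have hB : B.countP (fun x : Fin (K + 1) => (x : ℕ) ≤ j) = Multiset.card B :=
        Multiset.countP_eq_card.mpr (fun x _ => by have := x.isLt; omega)
      rw [hA, hB, hcard]
  have hcount : ∀ a : Fin (K + 1), A.count a = B.count a := by
    intro a
    rw [← countP_eq_count A a, ← countP_eq_count B a]
    rcases Nat.eq_zero_or_pos (a : ℕ) with ha | ha
    · have e : ∀ C : Multiset (Fin (K + 1)),
          C.countP (fun x : Fin (K + 1) => (x : ℕ) = (a : ℕ)) = C.countP (fun x : Fin (K + 1) => (x : ℕ) ≤ 0) := by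
        intro C
        apply Multiset.countP_congr rfl
        intro x _
        simp only [eq_iff_iff]
        omega
      rw [e A, e B, hall 0]
    · obtain ⟨j, hj⟩ : ∃ j, (a : ℕ) = j + 1 := ⟨(a : ℕ) - 1, by omega⟩
      have eA : A.countP (fun x : Fin (K + 1) => (x : ℕ) = (a : ℕ)) =
          A.countP (fun x : Fin (K + 1) => (x : ℕ) = j + 1) := by
        apply Multiset.countP_congr rfl
        intro x _
        rw [hj]
      have eB : B.countP (fun x : Fin (K + 1) => (x : ℕ) = (a : ℕ)) =
          B.countP (fun x : Fin (K + 1) => (x : ℕ) = j + 1) := by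
        apply Multiset.countP_congr rfl
        intro x _
        rw [hj]
      have hA := countP_le_succ A j
      have hB := countP_le_succ B j
      have h1 := hall j
      have h2 := hall (j + 1)
      omega
  exact Multiset.ext.mpr hcount

/-! ### The two subtypes -/

/-- Labelled parallelogram polyominoes, in the (g, d) encoding. -/
abbrev LP (K N : ℕ) := {p : (Fin (N + 1) → Fin (K + 1)) × (Fin K → Fin (N + 1 + 1)) //
    Monotone p.2 ∧ ∀ i : Fin K,
      (p.2 i : ℕ) < (Finset.univ.filter fun m : Fin (N + 1) => (p.1 m : ℕ) ≤ (i : ℕ)).card}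

/-- Valid pairs (g, multiset). -/
abbrev VP (K N : ℕ) := {q : (Fin (N + 1) → Fin (K + 1)) × Sym (Fin (K + 1)) N //
    Cond q.1 (q.2 : Multiset (Fin (K + 1)))}

def dOf (M : Multiset (Fin (K + 1))) (hM : Multiset.card M = N) (i : Fin K) : Fin (N + 2) :=
  ⟨M.countP (fun x : Fin (K + 1) => (x : ℕ) ≤ (i : ℕ)), by
    have := Multiset.countP_le_card (fun x : Fin (K + 1) => (x : ℕ) ≤ (i : ℕ)) M
    omega⟩

lemma dOf_mono (M : Multiset (Fin (K + 1))) (hM : Multiset.card M = N) :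
    Monotone (dOf M hM) := by
  intro i1 i2 h12
  simp only [dOf, Fin.mk_le_mk]
  exact countP_mono_pred M _ _ (fun x hx => le_trans hx h12)

def eLV (K N : ℕ) : LP K N ≃ VP K N where
  toFun p := ⟨⟨p.1.1, ⟨Mof p.1.2, Mof_card _⟩⟩, by
    intro i
    have hb : (p.1.2 i : ℕ) ≤ N := by
      have h1 := p.2.2 i
      have h2 : (Finset.univ.filter fun m : Fin (N + 1) =>
          (p.1.1 m : ℕ) ≤ (i : ℕ)).card ≤ N + 1 := by
        refine le_trans (Finset.card_filter_le _ _) ?_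
        simp
      omega
    show (Mof p.1.2).countP _ < _
    rw [countP_Mof p.2.1 i hb]
    exact p.2.2 i⟩
  invFun q := ⟨⟨q.1.1, dOf (q.1.2 : Multiset (Fin (K + 1))) (Sym.card_coe (s := q.1.2))⟩, by
    refine ⟨dOf_mono _ (Sym.card_coe (s := q.1.2)), ?_⟩
    intro i
    exact q.2 i⟩
  left_inv p := by
    apply Subtype.ext
    dsimp only
    congr 1
    funext i
    apply Fin.ext
    show (Mof p.1.2).countP _ = _
    have hb : (p.1.2 i : ℕ) ≤ N := by
      have h1 := p.2.2 i
      have h2 : (Finset.univ.filter fun m : Fin (N + 1) =>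
          (p.1.1 m : ℕ) ≤ (i : ℕ)).card ≤ N + 1 := by
        refine le_trans (Finset.card_filter_le _ _) ?_
        simp
      omega
    exact countP_Mof p.2.1 i hb
  right_inv q := by
    apply Subtype.ext
    dsimp only
    congr 1
    apply Subtype.ext
    show Mof (dOf (q.1.2 : Multiset (Fin (K + 1))) (Sym.card_coe (s := q.1.2))) = _
    apply multiset_eq_of_cumul
    · rw [Mof_card]
      exact (Sym.card_coe (s := q.1.2)).symm
    · intro i
      have hb : (dOf (q.1.2 : Multiset (Fin (K + 1))) (Sym.card_coe (s := q.1.2)) i : ℕ) ≤ N := by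
        simp only [dOf]
        have := Multiset.countP_le_card (fun x : Fin (K + 1) => (x : ℕ) ≤ (i : ℕ))
          (q.1.2 : Multiset (Fin (K + 1)))
        have hc := (Sym.card_coe (s := q.1.2))
        omega
      rw [countP_Mof (dOf_mono _ _) i hb]
      rfl

/-! ### The shift decomposition -/

noncomputable def theShift (g : Fin (N + 1) → Fin (K + 1)) (M : Sym (Fin (K + 1)) N) :
    Fin (K + 1) :=
  (exists_unique_shift g (M : Multiset (Fin (K + 1))) (Sym.card_coe (s := M))).exists.choose

lemma theShift_spec (g : Fin (N + 1) → Fin (K + 1)) (M : Sym (Fin (K + 1)) N) :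
    Cond (fun m => g m - theShift g M)
      ((M : Multiset (Fin (K + 1))).map (fun x => x - theShift g M)) :=
  (exists_unique_shift g (M : Multiset (Fin (K + 1))) (Sym.card_coe (s := M))).exists.choose_spec

lemma theShift_eq (g : Fin (N + 1) → Fin (K + 1)) (M : Sym (Fin (K + 1)) N) (t : Fin (K + 1))
    (h : Cond (fun m => g m - t) ((M : Multiset (Fin (K + 1))).map (fun x => x - t))) :
    theShift g M = t :=
  (exists_unique_shift g (M : Multiset (Fin (K + 1))) (Sym.card_coe (s := M))).unique (theShift_spec g M) h

noncomputable def eShift (K N : ℕ) :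
    ((Fin (N + 1) → Fin (K + 1)) × Sym (Fin (K + 1)) N) ≃ (VP K N × Fin (K + 1)) where
  toFun x :=
    ⟨⟨⟨fun m => x.1 m - theShift x.1 x.2,
        ⟨(x.2 : Multiset (Fin (K + 1))).map (fun y => y - theShift x.1 x.2), by
          rw [Multiset.card_map]; exact (Sym.card_coe (s := x.2))⟩⟩, theShift_spec x.1 x.2⟩, theShift x.1 x.2⟩
  invFun y :=
    ⟨fun m => y.1.1.1 m + y.2,
      ⟨(y.1.1.2 : Multiset (Fin (K + 1))).map (fun z => z + y.2), by
        rw [Multiset.card_map]; exact (Sym.card_coe (s := y.1.1.2))⟩⟩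
  left_inv x := by
    apply Prod.ext
    · funext m
      exact sub_add_cancel _ _
    · apply Subtype.ext
      show Multiset.map _ (Multiset.map _ _) = _
      rw [Multiset.map_map]
      have he : ((fun z : Fin (K + 1) => z + theShift x.1 x.2) ∘
          (fun y : Fin (K + 1) => y - theShift x.1 x.2)) = id :=
        funext fun z => sub_add_cancel _ _
      rw [he, Multiset.map_id]
      rfl
  right_inv y := by
    obtain ⟨⟨⟨g0, M0⟩, hc⟩, t⟩ := y
    have e1 : (fun m => (g0 m + t) - t) = g0 := funext fun m => add_sub_cancel_right _ _
    have e2 : (((M0 : Multiset (Fin (K + 1))).map (fun z => z + t)).map (fun z => z - t)) =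
        (M0 : Multiset (Fin (K + 1))) := by
      rw [Multiset.map_map]
      have he : ((fun z : Fin (K + 1) => z - t) ∘ (fun z : Fin (K + 1) => z + t)) = id :=
        funext fun z => add_sub_cancel_right _ _
      rw [he, Multiset.map_id]
    have hts : theShift (fun m => g0 m + t)
        (⟨(M0 : Multiset (Fin (K + 1))).map (fun z => z + t), by
          rw [Multiset.card_map]; exact (Sym.card_coe (s := M0))⟩ : Sym (Fin (K + 1)) N) = t := by
      apply theShift_eq
      show Cond (fun m => (g0 m + t) - t)
        ((((M0 : Multiset (Fin (K + 1))).map (fun z => z + t))).map (fun z => z - t))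
      rw [e2, show (fun m => (g0 m + t) - t) = g0 from e1]
      exact hc
    apply Prod.ext
    · apply Subtype.ext
      apply Prod.ext
      · show (fun m => (g0 m + t) - theShift _ _) = g0
        rw [hts]
        exact e1
      · apply Subtype.ext
        show Multiset.map _ _ = _
        rw [hts]
        exact e2
    · exact hts

/-! ### Counting -/

theorem master (K N : ℕ) :
    Nat.card (LP K N) = (K + 1) ^ N * Nat.choose (N + K) K := by
  have h1 : Nat.card (LP K N) = Nat.card (VP K N) := Nat.card_congr (eLV K N)
  have h2 : Nat.card ((Fin (N + 1) → Fin (K + 1)) × Sym (Fin (K + 1)) N) =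
      Nat.card (VP K N) * (K + 1) := by
    rw [Nat.card_congr (eShift K N), Nat.card_prod]
    congr 1
    rw [Nat.card_eq_fintype_card, Fintype.card_fin]
  have h3 : Nat.card ((Fin (N + 1) → Fin (K + 1)) × Sym (Fin (K + 1)) N) =
      (K + 1) ^ (N + 1) * Nat.choose (N + K) N := by
    rw [Nat.card_prod, Nat.card_eq_fintype_card, Nat.card_eq_fintype_card,
      Fintype.card_fun, Fintype.card_fin, Fintype.card_fin, Sym.card_sym_eq_choose,
      Fintype.card_fin]
    congr 2
    omega
  have h4 : Nat.choose (N + K) N = Nat.choose (N + K) K := by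
    rw [← Nat.choose_symm (by omega : K ≤ N + K)]
    congr 1
    omega
  have h5 : Nat.card (VP K N) * (K + 1) = ((K + 1) ^ N * Nat.choose (N + K) K) * (K + 1) := by
    rw [← h2, h3, h4]
    ring
  have h6 := Nat.eq_of_mul_eq_mul_right (by omega : 0 < K + 1) h5
  rw [h1, h6]

end Stmt3Aux

/-- The number of labelled parallelogram polyominoes of width `k` and height `n`,
encoded as pairs `(g, d)` where `g : Fin n → Fin k` records the column of each
label on the upper path and `d : Fin (k-1) → Fin (n+1)` is the weakly increasing
interior-height sequence of the lower path, with the strictly-below condition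
`d i < #{m : g m ≤ i}`, equals `k^(n-1) * C(n+k-2, k-1)`. -/
theorem stmt3 (k n : ℕ) (hk : 1 ≤ k) (hn : 1 ≤ n) :
    Nat.card {p : (Fin n → Fin k) × (Fin (k - 1) → Fin (n + 1)) //
        Monotone p.2 ∧ ∀ i : Fin (k - 1),
          (p.2 i : ℕ) < (Finset.univ.filter fun m : Fin n => (p.1 m : ℕ) ≤ (i : ℕ)).card} =
      k ^ (n - 1) * Nat.choose (n + k - 2) (k - 1) := by
  obtain ⟨K, rfl⟩ : ∃ K, k = K + 1 := ⟨k - 1, by omega⟩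
  obtain ⟨N, rfl⟩ : ∃ N, n = N + 1 := ⟨n - 1, by omega⟩
  have h := Stmt3Aux.master K N
  have e1 : K + 1 - 1 = K := by omega
  have e2 : N + 1 - 1 = N := by omega
  have e3 : N + 1 + (K + 1) - 2 = N + K := by omega
  simp only [e1, e2, e3]
  exact h
end

section
/- Fix natural numbers k ≥ 1 and n ≥ 1, and let σ be a permutation of Fin n. Let L be the set of pairs (g, d) where g : Fin n → Fin k, d : Fin (k-1) → Fin (n+1) is weakly increasing, and for every i : Fin (k-1), (d i : ℕ) < card { m : Fin n | (g m : ℕ) ≤ (i : ℕ) }. Let c denote the number of orbits of the cyclic subgroup generated by σ acting on Fin n (i.e. the number of cycles of σ, counting fixed points as cycles). Then card { (g, d) ∈ L | g ∘ σ = g } = k^(c-1) · C(n+k-2, k-1). -/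
namespace Stmt5Aux

variable {k n : ℕ}

/-! ### Basic definitions -/

/-- number of labels in columns `< j` (height of the upper path). -/
def Acnt (g : Fin n → Fin k) (j : ℕ) : ℕ :=
  (Finset.univ.filter fun m => (g m : ℕ) < j).card

/-- column content of the lower path, as a `ℕ`-indexed function. -/
def bv (b : Fin k → Fin n) (i : ℕ) : ℕ :=
  if h : i < k then (b ⟨i, h⟩ : ℕ) else 0

/-- height of the lower path. -/
def Bv (b : Fin k → Fin n) (j : ℕ) : ℕ := ∑ i ∈ Finset.range j, bv b i

def Ok (σ : Equiv.Perm (Fin n)) (p : (Fin n → Fin k) × (Fin k → Fin n)) : Prop :=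
  p.1 ∘ σ = p.1 ∧ ∑ j, (p.2 j : ℕ) = n - 1

def Valid (p : (Fin n → Fin k) × (Fin k → Fin n)) : Prop :=
  ∀ j : Fin k, 1 ≤ (j : ℕ) → Bv p.2 (j : ℕ) < Acnt p.1 (j : ℕ)

/-- the cyclic shift action. -/
def act (t : Fin k) (p : (Fin n → Fin k) × (Fin k → Fin n)) :
    (Fin n → Fin k) × (Fin k → Fin n) :=
  (fun m => p.1 m - t, fun j => p.2 (j + t))

/-- the tie-broken discrepancy function; `Valid (act t p)` iff `Vf p` has its strict
minimum at `t`. -/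
def Vf (p : (Fin n → Fin k) × (Fin k → Fin n)) (j : Fin k) : ℤ :=
  k * ((Acnt p.1 (j : ℕ) : ℤ) - (Bv p.2 (j : ℕ) : ℤ)) - (j : ℕ)

instance (σ : Equiv.Perm (Fin n)) : DecidablePred (Ok (k := k) σ) := fun p => by
  unfold Ok; infer_instance

instance : DecidablePred (Valid (k := k) (n := n)) := fun p => by
  unfold Valid; infer_instance

/-! ### Basic lemmas -/

lemma Bv_succ (b : Fin k → Fin n) (j : ℕ) : Bv b (j + 1) = Bv b j + bv b j :=
  Finset.sum_range_succ _ _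

lemma Bv_pred (b : Fin k → Fin n) {j : ℕ} (hj : 0 < j) :
    Bv b j = Bv b (j - 1) + bv b (j - 1) := by
  obtain ⟨i, rfl⟩ : ∃ i, j = i + 1 := ⟨j - 1, by omega⟩
  simp [Bv_succ]

lemma Bv_mono (b : Fin k → Fin n) : Monotone (Bv b) := fun _ _ h =>
  Finset.sum_le_sum_of_subset (Finset.range_subset_range.2 h)

lemma Bv_k (b : Fin k → Fin n) : Bv b k = ∑ j, (b j : ℕ) := by
  rw [Bv, ← Fin.sum_univ_eq_sum_range (fun i => bv b i) k]
  refine Finset.sum_congr rfl fun i _ => ?_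
  simp [bv, i.isLt]

lemma act_act [NeZero k] (t s : Fin k) (p : (Fin n → Fin k) × (Fin k → Fin n)) :
    act t (act s p) = act (s + t) p := by
  unfold act
  refine Prod.ext (funext fun m => ?_) (funext fun j => ?_)
  · simp [sub_sub]
  · simp [add_assoc, add_comm t s]

lemma act_zero [NeZero k] (p : (Fin n → Fin k) × (Fin k → Fin n)) : act 0 p = p := by
  unfold act
  refine Prod.ext (funext fun m => ?_) (funext fun j => ?_) <;> simp

lemma Ok_act [NeZero k] (σ : Equiv.Perm (Fin n)) (t : Fin k) {p} (h : Ok σ p) :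
    Ok σ (act t p) := by
  obtain ⟨h1, h2⟩ := h
  constructor
  · funext m
    simp only [act, Function.comp_apply]
    rw [show p.1 (σ m) = (p.1 ∘ σ) m from rfl, h1]
  · rw [← h2]
    exact Fintype.sum_equiv (Equiv.addRight t) _ _ fun j => rfl

/-! ### Shift identities -/

lemma Acnt_shift [NeZero k] (g : Fin n → Fin k) (t j : Fin k) :
    Acnt (fun m => g m - t) (j : ℕ) + Acnt g (t : ℕ) =
      Acnt g ((j + t : Fin k) : ℕ) + (if k ≤ (j : ℕ) + (t : ℕ) then n else 0) := by
  classical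
  have hconst : (if k ≤ (j : ℕ) + (t : ℕ) then n else 0) =
      ∑ _m : Fin n, (if k ≤ (j : ℕ) + (t : ℕ) then 1 else 0) := by
    split_ifs <;> simp
  simp only [Acnt, Finset.card_filter, hconst, ← Finset.sum_add_distrib]
  refine Finset.sum_congr rfl fun m _ => ?_
  have hk : 0 < k := k.pos_of_neZero
  have hr : (g m : ℕ) < k := (g m).isLt
  have hT : (t : ℕ) < k := t.isLt
  have hJ : (j : ℕ) < k := j.isLt
  have hsub : ((g m - t : Fin k) : ℕ) = (k - (t : ℕ) + (g m : ℕ)) % k := by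
    rw [Fin.sub_def]
  have hadd : ((j + t : Fin k) : ℕ) = ((j : ℕ) + (t : ℕ)) % k := Fin.val_add j t
  have h1 : (k - (t : ℕ) + (g m : ℕ)) % k =
      if k - (t : ℕ) + (g m : ℕ) < k then k - (t : ℕ) + (g m : ℕ)
      else k - (t : ℕ) + (g m : ℕ) - k := by
    split_ifs with h
    · exact Nat.mod_eq_of_lt h
    · rw [Nat.mod_eq_sub_mod (le_of_not_gt h)]
      exact Nat.mod_eq_of_lt (by omega)
  have h2 : ((j : ℕ) + (t : ℕ)) % k =
      if (j : ℕ) + (t : ℕ) < k then (j : ℕ) + (t : ℕ) else (j : ℕ) + (t : ℕ) - k := by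
    split_ifs with h
    · exact Nat.mod_eq_of_lt h
    · rw [Nat.mod_eq_sub_mod (le_of_not_gt h)]
      exact Nat.mod_eq_of_lt (by omega)
  rw [hsub, hadd, h1, h2]
  split_ifs <;> omega

lemma bv_shift [NeZero k] (b : Fin k → Fin n) (t : Fin k) {i : ℕ} (hi : i < k) :
    bv (fun x => b (x + t)) i = bv b ((i + (t : ℕ)) % k) := by
  have h2 : (i + (t : ℕ)) % k < k := Nat.mod_lt _ k.pos_of_neZero
  rw [bv, dif_pos hi, bv, dif_pos h2]
  have he : (⟨i, hi⟩ + t : Fin k) = ⟨(i + (t : ℕ)) % k, h2⟩ := Fin.ext (by simp [Fin.val_add])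
  rw [he]

lemma Bv_shift_aux [NeZero k] (b : Fin k → Fin n) (t : Fin k) :
    ∀ J, J ≤ k → Bv (fun x => b (x + t)) J + Bv b (t : ℕ) =
      Bv b ((J + (t : ℕ)) % k) + (if k ≤ J + (t : ℕ) then Bv b k else 0) := by
  have hT : (t : ℕ) < k := t.isLt
  intro J
  induction J with
  | zero =>
      intro _
      rw [Nat.mod_eq_of_lt (by omega)]
      simp [Bv]
  | succ J ih =>
      intro hJ1
      have hJ : J < k := by omega
      have hrec := ih (by omega)
      rw [Bv_succ, bv_shift b t hJ]
      by_cases hw : k ≤ J + (t : ℕ)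
      · have hs : (J + (t : ℕ)) % k = J + (t : ℕ) - k := by
          rw [Nat.mod_eq_sub_mod hw]; exact Nat.mod_eq_of_lt (by omega)
        have hs' : (J + 1 + (t : ℕ)) % k = J + (t : ℕ) - k + 1 := by
          rw [Nat.mod_eq_sub_mod (by omega)]
          rw [show J + 1 + (t : ℕ) - k = J + (t : ℕ) - k + 1 by omega]
          exact Nat.mod_eq_of_lt (by omega)
        rw [hs, hs', if_pos (by omega), Bv_succ]
        rw [hs, if_pos hw] at hrec
        omega
      · by_cases hw' : k ≤ J + 1 + (t : ℕ)
        · have hs : (J + (t : ℕ)) % k = k - 1 := Nat.mod_eq_of_lt (by omega) |>.trans (by omega)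
          have hs' : (J + 1 + (t : ℕ)) % k = 0 := by
            rw [show J + 1 + (t : ℕ) = k by omega, Nat.mod_self]
          rw [hs, hs', if_pos hw', Bv_pred b k.pos_of_neZero]
          rw [hs, if_neg (by omega)] at hrec
          have h0 : Bv b 0 = 0 := rfl
          omega
        · have hs : (J + (t : ℕ)) % k = J + (t : ℕ) := Nat.mod_eq_of_lt (by omega)
          have hs' : (J + 1 + (t : ℕ)) % k = J + 1 + (t : ℕ) := Nat.mod_eq_of_lt (by omega)
          rw [hs, hs', if_neg (by omega),
            show J + 1 + (t : ℕ) = (J + (t : ℕ)) + 1 by omega, Bv_succ]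
          rw [hs, if_neg (by omega)] at hrec
          omega

lemma Bv_shift [NeZero k] (b : Fin k → Fin n) (t j : Fin k) :
    Bv (fun x => b (x + t)) (j : ℕ) + Bv b (t : ℕ) =
      Bv b ((j + t : Fin k) : ℕ) + (if k ≤ (j : ℕ) + (t : ℕ) then Bv b k else 0) := by
  have := Bv_shift_aux b t (j : ℕ) (le_of_lt j.isLt)
  rwa [← Fin.val_add] at this

lemma Vf_shift [NeZero k] (hn : 1 ≤ n) (p : (Fin n → Fin k) × (Fin k → Fin n))
    (hsum : ∑ j, (p.2 j : ℕ) = n - 1) (t j : Fin k) :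
    Vf (act t p) j = Vf p (j + t) - Vf p t := by
  have hBk : Bv p.2 k = n - 1 := by rw [Bv_k, hsum]
  have hA := Acnt_shift p.1 t j
  have hB := Bv_shift p.2 t j
  rw [hBk] at hB
  have hadd : ((j + t : Fin k) : ℕ) = ((j : ℕ) + (t : ℕ)) % k := Fin.val_add j t
  by_cases hw : k ≤ (j : ℕ) + (t : ℕ)
  · rw [if_pos hw] at hA hB
    have hA' : (Acnt (fun m => p.1 m - t) (j : ℕ) : ℤ) =
        (Acnt p.1 ((j + t : Fin k) : ℕ) : ℤ) + n - Acnt p.1 (t : ℕ) := by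
      have := congrArg (fun x : ℕ => (x : ℤ)) hA
      push_cast at this ⊢
      linarith
    have hB' : (Bv (fun x => p.2 (x + t)) (j : ℕ) : ℤ) =
        (Bv p.2 ((j + t : Fin k) : ℕ) : ℤ) + ((n : ℤ) - 1) - Bv p.2 (t : ℕ) := by
      have := congrArg (fun x : ℕ => (x : ℤ)) hB
      push_cast [hn] at this ⊢
      omega
    have hS' : (((j + t : Fin k) : ℕ) : ℤ) = (j : ℕ) + (t : ℕ) - k := by
      have hS : ((j + t : Fin k) : ℕ) = (j : ℕ) + (t : ℕ) - k := by
        rw [hadd, Nat.mod_eq_sub_mod hw]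
        exact Nat.mod_eq_of_lt (by have := j.isLt; have := t.isLt; omega)
      omega
    show (k : ℤ) * ((Acnt (fun m => p.1 m - t) (j : ℕ) : ℤ) -
        (Bv (fun x => p.2 (x + t)) (j : ℕ) : ℤ)) - (j : ℕ) = _
    rw [hA', hB', Vf, Vf, hS']
    ring
  · rw [if_neg hw] at hA hB
    have hA' : (Acnt (fun m => p.1 m - t) (j : ℕ) : ℤ) =
        (Acnt p.1 ((j + t : Fin k) : ℕ) : ℤ) - Acnt p.1 (t : ℕ) := by
      have := congrArg (fun x : ℕ => (x : ℤ)) hA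
      push_cast at this ⊢
      linarith
    have hB' : (Bv (fun x => p.2 (x + t)) (j : ℕ) : ℤ) =
        (Bv p.2 ((j + t : Fin k) : ℕ) : ℤ) - Bv p.2 (t : ℕ) := by
      have := congrArg (fun x : ℕ => (x : ℤ)) hB
      push_cast at this ⊢
      omega
    have hS' : (((j + t : Fin k) : ℕ) : ℤ) = (j : ℕ) + (t : ℕ) := by
      have hS : ((j + t : Fin k) : ℕ) = (j : ℕ) + (t : ℕ) := by
        rw [hadd]; exact Nat.mod_eq_of_lt (by omega)
      omega
    show (k : ℤ) * ((Acnt (fun m => p.1 m - t) (j : ℕ) : ℤ) -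
        (Bv (fun x => p.2 (x + t)) (j : ℕ) : ℤ)) - (j : ℕ) = _
    rw [hA', hB', Vf, Vf, hS']
    ring

/-! ### The unique valid shift -/

lemma Vf_inj (p : (Fin n → Fin k) × (Fin k → Fin n)) : Function.Injective (Vf p) := by
  intro a b h
  rw [Vf, Vf] at h
  have hd : (k : ℤ) ∣ ((a : ℕ) : ℤ) - ((b : ℕ) : ℤ) :=
    ⟨((Acnt p.1 (a : ℕ) : ℤ) - Bv p.2 (a : ℕ)) - ((Acnt p.1 (b : ℕ) : ℤ) - Bv p.2 (b : ℕ)),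
      by linarith⟩
  have hz : ((a : ℕ) : ℤ) - ((b : ℕ) : ℤ) = 0 := by
    refine Int.eq_zero_of_dvd_of_natAbs_lt_natAbs hd ?_
    have ha := a.isLt; have hb := b.isLt
    omega
  exact Fin.ext (by omega)

lemma valid_iff [NeZero k] (p : (Fin n → Fin k) × (Fin k → Fin n)) :
    Valid p ↔ ∀ s : Fin k, s ≠ 0 → 0 < Vf p s := by
  constructor
  · intro hv s hs
    have h1 : 1 ≤ (s : ℕ) := by
      rcases Nat.eq_zero_or_pos (s : ℕ) with h | h
      · exact absurd (Fin.ext (by simp [h])) hs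
      · exact h
    have h2 := hv s h1
    have h3 : (1 : ℤ) ≤ (Acnt p.1 (s : ℕ) : ℤ) - (Bv p.2 (s : ℕ) : ℤ) := by
      have : ((Bv p.2 (s : ℕ) : ℤ)) < (Acnt p.1 (s : ℕ) : ℤ) := by exact_mod_cast h2
      omega
    have h4 : (s : ℕ) < k := s.isLt
    rw [Vf]
    nlinarith [h3, h4]
  · intro hv j hj
    have hs : j ≠ 0 := by
      intro h; rw [h] at hj; simp at hj
    have h := hv j hs
    rw [Vf] at h
    by_contra hc
    push_neg at hc
    have h3 : (Acnt p.1 (j : ℕ) : ℤ) - Bv p.2 (j : ℕ) ≤ 0 := by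
      have : (Acnt p.1 (j : ℕ) : ℤ) ≤ Bv p.2 (j : ℕ) := by exact_mod_cast hc
      linarith
    have h4 : (k : ℤ) * ((Acnt p.1 (j : ℕ) : ℤ) - Bv p.2 (j : ℕ)) ≤ 0 :=
      mul_nonpos_of_nonneg_of_nonpos (by positivity) h3
    have : (0 : ℤ) ≤ (j : ℕ) := by positivity
    linarith

lemma validShift_iff [NeZero k] (hn : 1 ≤ n) (p : (Fin n → Fin k) × (Fin k → Fin n))
    (hsum : ∑ j, (p.2 j : ℕ) = n - 1) (t : Fin k) :
    Valid (act t p) ↔ ∀ s : Fin k, s ≠ t → Vf p t < Vf p s := by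
  rw [valid_iff]
  constructor
  · intro hv s hs
    have := hv (s - t) (by
      intro h
      apply hs
      have := congrArg (· + t) h
      simpa [sub_add_cancel] using this)
    rw [Vf_shift hn p hsum, sub_add_cancel] at this
    linarith
  · intro hv j hj
    rw [Vf_shift hn p hsum]
    have : j + t ≠ t := by
      intro h
      apply hj
      have := congrArg (· - t) h
      simpa [add_sub_cancel_right, sub_self] using this
    have := hv (j + t) this
    linarith

lemma exUnique [NeZero k] (hn : 1 ≤ n) (p : (Fin n → Fin k) × (Fin k → Fin n))
    (hsum : ∑ j, (p.2 j : ℕ) = n - 1) :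
    ∃! t : Fin k, Valid (act t p) := by
  obtain ⟨t, -, ht⟩ := Finset.exists_min_image Finset.univ (Vf p)
    ⟨0, Finset.mem_univ 0⟩
  refine ⟨t, ?_, ?_⟩
  · show Valid (act t p)
    rw [validShift_iff hn p hsum]
    intro s hs
    exact lt_of_le_of_ne (ht s (Finset.mem_univ s)) fun h => hs (Vf_inj p h.symm)
  · intro t' ht'
    replace ht' : Valid (act t' p) := ht'
    rw [validShift_iff hn p hsum] at ht'
    by_contra h
    exact absurd (ht' t (Ne.symm h)) (not_lt.2 (ht t' (Finset.mem_univ t')))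

/-! ### Double counting -/

lemma card_filter_eq [NeZero k] (σ : Equiv.Perm (Fin n)) (t : Fin k) :
    (Finset.univ.filter fun p : (Fin n → Fin k) × (Fin k → Fin n) =>
        Ok σ p ∧ Valid (act t p)).card =
      (Finset.univ.filter fun p : (Fin n → Fin k) × (Fin k → Fin n) =>
        Ok σ p ∧ Valid p).card := by
  refine Finset.card_bij' (fun p _ => act t p) (fun q _ => act (-t) q) ?_ ?_ ?_ ?_
  · intro p hp
    rw [Finset.mem_filter] at hp ⊢
    exact ⟨Finset.mem_univ _, Ok_act σ t hp.2.1, hp.2.2⟩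
  · intro q hq
    rw [Finset.mem_filter] at hq ⊢
    refine ⟨Finset.mem_univ _, Ok_act σ (-t) hq.2.1, ?_⟩
    rw [act_act, neg_add_cancel, act_zero]
    exact hq.2.2
  · intro p _
    show act (-t) (act t p) = p
    rw [act_act, add_neg_cancel, act_zero]
  · intro q _
    show act t (act (-t) q) = q
    rw [act_act, neg_add_cancel, act_zero]

lemma double_count [NeZero k] (hn : 1 ≤ n) (σ : Equiv.Perm (Fin n)) :
    (Finset.univ.filter fun p : (Fin n → Fin k) × (Fin k → Fin n) =>
        Ok σ p ∧ Valid p).card * k =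
      (Finset.univ.filter fun p : (Fin n → Fin k) × (Fin k → Fin n) => Ok σ p).card := by
  classical
  have key : ∀ p : (Fin n → Fin k) × (Fin k → Fin n), Ok σ p →
      (Finset.univ.filter fun t : Fin k => Valid (act t p)).card = 1 := by
    intro p hp
    obtain ⟨t, ht, hu⟩ := exUnique hn p hp.2
    rw [Finset.card_eq_one]
    refine ⟨t, ?_⟩
    ext s
    simp only [Finset.mem_filter, Finset.mem_univ, true_and, Finset.mem_singleton]
    exact ⟨fun h => hu s h, fun h => h ▸ ht⟩
  calc (Finset.univ.filter fun p => Ok σ p ∧ Valid p).card * k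
      = ∑ t : Fin k, (Finset.univ.filter fun p : (Fin n → Fin k) × (Fin k → Fin n) =>
          Ok σ p ∧ Valid (act t p)).card := by
        rw [Finset.sum_congr rfl fun t _ => card_filter_eq σ t, Finset.sum_const,
          Finset.card_univ, Fintype.card_fin, smul_eq_mul, mul_comm]
    _ = ∑ t : Fin k, ∑ p : (Fin n → Fin k) × (Fin k → Fin n),
          (if Ok σ p ∧ Valid (act t p) then 1 else 0) := by
        refine Finset.sum_congr rfl fun t _ => ?_
        rw [Finset.card_filter]
    _ = ∑ p : (Fin n → Fin k) × (Fin k → Fin n), ∑ t : Fin k,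
          (if Ok σ p ∧ Valid (act t p) then 1 else 0) := Finset.sum_comm
    _ = ∑ p : (Fin n → Fin k) × (Fin k → Fin n), (if Ok σ p then 1 else 0) := by
        refine Finset.sum_congr rfl fun p _ => ?_
        by_cases hp : Ok σ p
        · simp only [hp, true_and, if_true]
          rw [← Finset.card_filter, key p hp]
        · simp [hp]
    _ = (Finset.univ.filter fun p => Ok σ p).card := (Finset.card_filter _ _).symm

lemma fix_zpow {g : Fin n → Fin k} {σ : Equiv.Perm (Fin n)} (hg2 : g ∘ σ = g)
    (z : ℤ) (m : Fin n) : g ((σ ^ z) m) = g m := by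
  have hg : ∀ m, g (σ m) = g m := fun m => congrFun hg2 m
  have hnat : ∀ (z : ℕ) (m : Fin n), g ((σ ^ z) m) = g m := by
    intro z
    induction z with
    | zero => intro m; simp
    | succ z ih =>
        intro m
        rw [pow_succ, Equiv.Perm.mul_apply]
        rw [ih (σ m), hg m]
  obtain ⟨z, rfl⟩ | ⟨z, rfl⟩ : (∃ w : ℕ, z = (w : ℤ)) ∨ (∃ w : ℕ, z = Int.negSucc w) := by
    rcases z with w | w
    · exact Or.inl ⟨w, rfl⟩
    · exact Or.inr ⟨w, rfl⟩
  · rw [zpow_natCast]; exact hnat z m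
  · rw [show (Int.negSucc z) = -((z+1 : ℕ) : ℤ) by rfl, zpow_neg, zpow_natCast]
    have := hnat (z + 1) ((σ ^ (z + 1))⁻¹ m)
    rw [show (σ ^ (z + 1)) ((σ ^ (z + 1))⁻¹ m) = m from Equiv.apply_symm_apply _ _] at this
    exact this.symm

def fixedEquiv (σ : Equiv.Perm (Fin n)) :
    {g : Fin n → Fin k // g ∘ σ = g} ≃
      (MulAction.orbitRel.Quotient (Subgroup.zpowers σ) (Fin n) → Fin k) where
  toFun g := Quotient.lift g.1 (by
    intro a b hab
    obtain ⟨u, hu⟩ := hab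
    obtain ⟨z, hz⟩ := Subgroup.mem_zpowers_iff.1 u.2
    have : (σ ^ z) b = a := by
      rw [hz]
      exact hu
    rw [← this, fix_zpow g.2])
  invFun h := ⟨h ∘ Quotient.mk'',
    funext fun m => congrArg h (Quotient.sound' ⟨⟨σ, Subgroup.mem_zpowers σ⟩, rfl⟩)⟩
  left_inv g := Subtype.ext rfl
  right_inv h := funext fun q => Quotient.inductionOn' q fun m => rfl


lemma card_msum {α β : Type*} (s : Finset α) (f : α → Multiset β) :
    Multiset.card (∑ j ∈ s, f j) = ∑ j ∈ s, Multiset.card (f j) := by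
  induction s using Finset.cons_induction with
  | empty => simp
  | cons a s ha ih => simp [Finset.sum_cons, ih]

def symEquiv (hn : 1 ≤ n) :
    {b : Fin k → Fin n // ∑ j, (b j : ℕ) = n - 1} ≃ Sym (Fin k) (n - 1) where
  toFun b := ⟨∑ j : Fin k, Multiset.replicate ((b.1 j : ℕ)) j, by
    rw [card_msum]
    simp only [Multiset.card_replicate]
    exact b.2⟩
  invFun s := ⟨fun j => ⟨Multiset.count j s.1, by
      have h1 : Multiset.count j s.1 ≤ Multiset.card s.1 := Multiset.count_le_card _ _
      rw [s.2] at h1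
      omega⟩, by
    show ∑ j : Fin k, Multiset.count j s.1 = n - 1
    rw [Multiset.sum_count_eq_card (fun a _ => Finset.mem_univ a), s.2]⟩
  left_inv b := by
    apply Subtype.ext
    funext j
    apply Fin.ext
    show Multiset.count j (∑ i : Fin k, Multiset.replicate ((b.1 i : ℕ)) i) = (b.1 j : ℕ)
    rw [Multiset.count_sum']
    rw [Finset.sum_eq_single j]
    · rw [Multiset.count_replicate, if_pos rfl]
    · intro i _ hij
      rw [Multiset.count_replicate, if_neg hij]
    · intro h
      exact absurd (Finset.mem_univ j) h
  right_inv s := by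
    apply Subtype.ext
    ext a
    rw [Multiset.count_sum']
    rw [Finset.sum_eq_single a]
    · rw [Multiset.count_replicate, if_pos rfl]
    · intro i _ hia
      rw [Multiset.count_replicate, if_neg hia]
    · intro h
      exact absurd (Finset.mem_univ a) h

lemma card_bset (hk : 1 ≤ k) (hn : 1 ≤ n) :
    Nat.card {b : Fin k → Fin n // ∑ j, (b j : ℕ) = n - 1} =
      Nat.choose (n + k - 2) (k - 1) := by
  rw [Nat.card_congr (symEquiv hn)]
  rw [Nat.card_eq_fintype_card, Sym.card_sym_eq_multichoose, Fintype.card_fin,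
    Nat.multichoose_eq]
  rw [show k + (n - 1) - 1 = n + k - 2 by omega]
  rw [← Nat.choose_symm (by omega : n - 1 ≤ n + k - 2)]
  congr 1
  omega


def Dd (d : Fin (k - 1) → Fin (n + 1)) (j : ℕ) : ℕ :=
  if h : 1 ≤ j ∧ j - 1 < k - 1 then (d ⟨j - 1, h.2⟩ : ℕ)
  else if j = 0 then 0 else n - 1

section main

lemma Acnt_le_pred {g : Fin n → Fin k} {J : ℕ} (hJ : 1 ≤ J) :
    Acnt g J = (Finset.univ.filter fun m => (g m : ℕ) ≤ J - 1).card := by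
  rw [Acnt]
  congr 1
  apply Finset.filter_congr
  intro m _
  constructor <;> intro h <;> omega

-- bound on d values under the polyomino condition
lemma d_le {g : Fin n → Fin k} {d : Fin (k - 1) → Fin (n + 1)}
    (hcond : ∀ i : Fin (k - 1),
      (d i : ℕ) < (Finset.univ.filter fun m : Fin n => (g m : ℕ) ≤ (i : ℕ)).card)
    (i : Fin (k - 1)) : (d i : ℕ) ≤ n - 1 := by
  have h := hcond i
  have h2 : (Finset.univ.filter fun m : Fin n => (g m : ℕ) ≤ (i : ℕ)).card ≤ n := by
    calc _ ≤ Finset.univ.card := Finset.card_filter_le _ _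
      _ = n := by rw [Finset.card_univ, Fintype.card_fin]
  omega

lemma Dd_le {g : Fin n → Fin k} {d : Fin (k - 1) → Fin (n + 1)}
    (hcond : ∀ i : Fin (k - 1),
      (d i : ℕ) < (Finset.univ.filter fun m : Fin n => (g m : ℕ) ≤ (i : ℕ)).card)
    (j : ℕ) : Dd d j ≤ n - 1 := by
  rw [Dd]
  split_ifs with h1 h2
  · exact d_le hcond _
  · omega
  · omega

lemma Dd_mono {g : Fin n → Fin k} {d : Fin (k - 1) → Fin (n + 1)} (hd : Monotone d)
    (hcond : ∀ i : Fin (k - 1),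
      (d i : ℕ) < (Finset.univ.filter fun m : Fin n => (g m : ℕ) ≤ (i : ℕ)).card) :
    Monotone (Dd d) := by
  intro a b hab
  unfold Dd
  split_ifs with h1 h2 h2 h3 h3 h4
  · exact hd (by simp only [Fin.mk_le_mk]; omega)
  · omega
  · have := d_le hcond ⟨a - 1, h1.2⟩
    omega
  · omega
  · omega
  · omega
  · omega
  · omega
  · omega

lemma Dd_zero (d : Fin (k - 1) → Fin (n + 1)) : Dd d 0 = 0 := by
  rw [Dd]; simp

lemma Dd_k (hk : 1 ≤ k) (d : Fin (k - 1) → Fin (n + 1)) : Dd d k = n - 1 := by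
  rw [Dd]
  rw [dif_neg (fun h => lt_irrefl _ h.2)]
  rw [if_neg (by omega)]

lemma Dd_mid (d : Fin (k - 1) → Fin (n + 1)) {J : ℕ} (h1 : 1 ≤ J) (h2 : J < k) :
    Dd d J = (d ⟨J - 1, by omega⟩ : ℕ) := by
  rw [Dd, dif_pos ⟨h1, by omega⟩]


lemma Bv_eq_Dd {d : Fin (k - 1) → Fin (n + 1)} (hmono : Monotone (Dd d))
    {b : Fin k → Fin n}
    (hb : ∀ j : Fin k, (b j : ℕ) = Dd d ((j : ℕ) + 1) - Dd d (j : ℕ)) :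
    ∀ J, J ≤ k → Bv b J = Dd d J := by
  intro J hJ
  rw [Bv, Finset.sum_congr rfl (fun i hi => ?_), Finset.sum_range_tsub hmono J, Dd_zero,
    Nat.sub_zero]
  rw [bv, dif_pos (lt_of_lt_of_le (Finset.mem_range.1 hi) hJ)]
  exact hb _

lemma Dd_of_Bv (hn : 1 ≤ n) {b : Fin k → Fin n} (hsum : ∑ j, (b j : ℕ) = n - 1)
    {d' : Fin (k - 1) → Fin (n + 1)}
    (hd' : ∀ i : Fin (k - 1), (d' i : ℕ) = Bv b ((i : ℕ) + 1)) :
    ∀ J, J ≤ k → Dd d' J = Bv b J := by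
  intro J hJ
  rw [Dd]
  split_ifs with h1 h2
  · rw [hd' ⟨J - 1, h1.2⟩]
    have h3 : ((⟨J - 1, h1.2⟩ : Fin (k - 1)) : ℕ) = J - 1 := rfl
    rw [h3, show J - 1 + 1 = J by omega]
  · rw [h2]; rfl
  · have hJk : J = k := by omega
    rw [hJk, Bv_k, hsum]

def toB (hn : 1 ≤ n) {g : Fin n → Fin k} (d : Fin (k - 1) → Fin (n + 1))
    (hcond : ∀ i : Fin (k - 1),
      (d i : ℕ) < (Finset.univ.filter fun m : Fin n => (g m : ℕ) ≤ (i : ℕ)).card) :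
    Fin k → Fin n :=
  fun j => ⟨Dd d ((j : ℕ) + 1) - Dd d (j : ℕ), by
    have h1 := Dd_le hcond ((j : ℕ) + 1)
    omega⟩

lemma toB_val (hn : 1 ≤ n) {g : Fin n → Fin k} (d : Fin (k - 1) → Fin (n + 1))
    (hcond : ∀ i : Fin (k - 1),
      (d i : ℕ) < (Finset.univ.filter fun m : Fin n => (g m : ℕ) ≤ (i : ℕ)).card)
    (j : Fin k) : (toB hn d hcond j : ℕ) = Dd d ((j : ℕ) + 1) - Dd d (j : ℕ) := rfl

lemma Bv_toB (hn : 1 ≤ n) {g : Fin n → Fin k} (d : Fin (k - 1) → Fin (n + 1))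
    (hcond : ∀ i : Fin (k - 1),
      (d i : ℕ) < (Finset.univ.filter fun m : Fin n => (g m : ℕ) ≤ (i : ℕ)).card)
    (hmono : Monotone d) :
    ∀ J, J ≤ k → Bv (toB hn d hcond) J = Dd d J :=
  Bv_eq_Dd (Dd_mono hmono hcond) (toB_val hn d hcond)

lemma toB_sum (hk : 1 ≤ k) (hn : 1 ≤ n) {g : Fin n → Fin k} (d : Fin (k - 1) → Fin (n + 1))
    (hcond : ∀ i : Fin (k - 1),
      (d i : ℕ) < (Finset.univ.filter fun m : Fin n => (g m : ℕ) ≤ (i : ℕ)).card)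
    (hmono : Monotone d) :
    ∑ j, (toB hn d hcond j : ℕ) = n - 1 := by
  have := Bv_toB hn d hcond hmono k le_rfl
  rw [Bv_k, Dd_k hk] at this
  exact this

def toD (hn : 1 ≤ n) (b : Fin k → Fin n) (hsum : ∑ j, (b j : ℕ) = n - 1) :
    Fin (k - 1) → Fin (n + 1) :=
  fun i => ⟨Bv b ((i : ℕ) + 1), by
    have h1 : Bv b ((i : ℕ) + 1) ≤ Bv b k := Bv_mono _ (by have := i.isLt; omega)
    rw [Bv_k, hsum] at h1
    omega⟩

lemma toD_val (hn : 1 ≤ n) (b : Fin k → Fin n) (hsum : ∑ j, (b j : ℕ) = n - 1)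
    (i : Fin (k - 1)) : (toD hn b hsum i : ℕ) = Bv b ((i : ℕ) + 1) := rfl

lemma Dd_toD (hn : 1 ≤ n) (b : Fin k → Fin n) (hsum : ∑ j, (b j : ℕ) = n - 1) :
    ∀ J, J ≤ k → Dd (toD hn b hsum) J = Bv b J :=
  Dd_of_Bv hn hsum (toD_val hn b hsum)

set_option maxHeartbeats 1000000 in
def mainEquiv (hk : 1 ≤ k) (hn : 1 ≤ n) (σ : Equiv.Perm (Fin n)) :
    {p : (Fin n → Fin k) × (Fin (k - 1) → Fin (n + 1)) //
        (Monotone p.2 ∧ ∀ i : Fin (k - 1),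
          (p.2 i : ℕ) < (Finset.univ.filter fun m : Fin n => (p.1 m : ℕ) ≤ (i : ℕ)).card) ∧
        p.1 ∘ σ = p.1} ≃
      {p : (Fin n → Fin k) × (Fin k → Fin n) // Ok σ p ∧ Valid p} where
  toFun p :=
    ⟨(p.1.1, toB hn p.1.2 p.2.1.2), by
      refine ⟨⟨p.2.2, toB_sum hk hn p.1.2 p.2.1.2 p.2.1.1⟩, ?_⟩
      intro j hj
      rw [show (((p.1.1, toB hn p.1.2 p.2.1.2) :
            (Fin n → Fin k) × (Fin k → Fin n))).2 = toB hn p.1.2 p.2.1.2 from rfl,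
        Bv_toB hn p.1.2 p.2.1.2 p.2.1.1 (j : ℕ) j.isLt.le,
        Acnt_le_pred hj, Dd_mid _ hj j.isLt]
      exact p.2.1.2 ⟨(j : ℕ) - 1, by omega⟩⟩
  invFun q :=
    ⟨(q.1.1, toD hn q.1.2 q.2.1.2), by
      refine ⟨⟨?_, ?_⟩, q.2.1.1⟩
      · intro a b hab
        show (toD hn q.1.2 q.2.1.2 a) ≤ (toD hn q.1.2 q.2.1.2 b)
        have : Bv q.1.2 ((a : ℕ) + 1) ≤ Bv q.1.2 ((b : ℕ) + 1) :=
          Bv_mono _ (by have : (a : ℕ) ≤ (b : ℕ) := hab; omega)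
        exact this
      · intro i
        show Bv q.1.2 ((i : ℕ) + 1) <
          (Finset.univ.filter fun m : Fin n => (q.1.1 m : ℕ) ≤ (i : ℕ)).card
        have h2 := q.2.2 ⟨(i : ℕ) + 1, by have := i.isLt; omega⟩ (by simp)
        rw [Acnt_le_pred (by simp)] at h2
        exact h2⟩
  left_inv p := by
    apply Subtype.ext
    refine Prod.ext rfl (funext fun i => Fin.ext ?_)
    show Bv (toB hn p.1.2 p.2.1.2) ((i : ℕ) + 1) = (p.1.2 i : ℕ)
    rw [Bv_toB hn p.1.2 p.2.1.2 p.2.1.1 ((i : ℕ) + 1) (by have := i.isLt; omega),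
      Dd_mid _ (by omega) (by have := i.isLt; omega)]
    congr 1
  right_inv q := by
    apply Subtype.ext
    refine Prod.ext rfl (funext fun j => Fin.ext ?_)
    show Dd (toD hn q.1.2 q.2.1.2) ((j : ℕ) + 1) - Dd (toD hn q.1.2 q.2.1.2) (j : ℕ) = (q.1.2 j : ℕ)
    rw [Dd_toD hn q.1.2 q.2.1.2 ((j : ℕ) + 1) j.isLt,
      Dd_toD hn q.1.2 q.2.1.2 (j : ℕ) j.isLt.le, Bv_succ]
    simp only [Nat.add_sub_cancel_left]
    rw [bv, dif_pos j.isLt]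


end main

end Stmt5Aux

open Stmt5Aux in
/-- Fixed-point count for the action of a permutation `σ` of the labels on
labelled parallelogram polyominoes of width `k` and height `n` (encoded as pairs
`(g, d)` with `g : Fin n → Fin k` the column of each label and
`d : Fin (k-1) → Fin (n+1)` the weakly increasing lower path satisfying
`d i < #{m : g m ≤ i}`): it equals `k^(c-1) * C(n+k-2, k-1)` where `c` is the
number of cycles (orbits) of `σ`. -/
theorem stmt5 (k n : ℕ) (hk : 1 ≤ k) (hn : 1 ≤ n) (σ : Equiv.Perm (Fin n)) :
    Nat.card {p : (Fin n → Fin k) × (Fin (k - 1) → Fin (n + 1)) //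
        (Monotone p.2 ∧ ∀ i : Fin (k - 1),
          (p.2 i : ℕ) < (Finset.univ.filter fun m : Fin n => (p.1 m : ℕ) ≤ (i : ℕ)).card) ∧
        p.1 ∘ σ = p.1} =
      k ^ (Nat.card (MulAction.orbitRel.Quotient (Subgroup.zpowers σ) (Fin n)) - 1) *
        Nat.choose (n + k - 2) (k - 1) := by
  classical
  haveI : NeZero k := ⟨by omega⟩
  haveI : Nonempty (MulAction.orbitRel.Quotient (Subgroup.zpowers σ) (Fin n)) :=
    ⟨Quotient.mk'' ⟨0, by omega⟩⟩
  set c := Nat.card (MulAction.orbitRel.Quotient (Subgroup.zpowers σ) (Fin n)) with hc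
  have hc1 : 1 ≤ c := Nat.card_pos
  have h1 : Nat.card {p : (Fin n → Fin k) × (Fin (k - 1) → Fin (n + 1)) //
      (Monotone p.2 ∧ ∀ i : Fin (k - 1),
        (p.2 i : ℕ) < (Finset.univ.filter fun m : Fin n => (p.1 m : ℕ) ≤ (i : ℕ)).card) ∧
      p.1 ∘ σ = p.1} =
      (Finset.univ.filter fun p : (Fin n → Fin k) × (Fin k → Fin n) =>
        Ok σ p ∧ Valid p).card := by
    rw [Nat.card_congr (mainEquiv hk hn σ), Nat.card_eq_fintype_card, Fintype.card_subtype]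
  have h2 : (Finset.univ.filter fun p : (Fin n → Fin k) × (Fin k → Fin n) =>
      Ok σ p).card = k ^ c * Nat.choose (n + k - 2) (k - 1) := by
    rw [← Fintype.card_subtype, ← Nat.card_eq_fintype_card]
    have e1 : {p : (Fin n → Fin k) × (Fin k → Fin n) // Ok σ p} ≃
        {g : Fin n → Fin k // g ∘ σ = g} × {b : Fin k → Fin n // ∑ j, (b j : ℕ) = n - 1} :=
      (Equiv.subtypeEquivRight
        (q := fun p : (Fin n → Fin k) × (Fin k → Fin n) =>
          p.1 ∘ σ = p.1 ∧ ∑ j, (p.2 j : ℕ) = n - 1)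
        fun p => Iff.rfl).trans
        (Equiv.subtypeProdEquivProd (p := fun g : Fin n → Fin k => g ∘ σ = g)
          (q := fun b : Fin k → Fin n => ∑ j, (b j : ℕ) = n - 1))
    rw [Nat.card_congr e1, Nat.card_prod, Nat.card_congr (fixedEquiv σ), Nat.card_fun,
      Nat.card_eq_fintype_card, Fintype.card_fin, card_bset hk hn, hc]
  have h3 := double_count (k := k) hn σ
  rw [h1]
  have h4 : (Finset.univ.filter fun p : (Fin n → Fin k) × (Fin k → Fin n) =>
      Ok σ p ∧ Valid p).card * k =
      (k ^ (c - 1) * Nat.choose (n + k - 2) (k - 1)) * k := by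
    rw [h3, h2]
    have : k ^ c = k ^ (c - 1) * k := by
      rw [← pow_succ]
      congr 1
      omega
    rw [this]
    ring
  exact Nat.eq_of_mul_eq_mul_right (by omega) h4
end

section
/- Fix natural numbers k ≥ 1 and n ≥ 1, and let λ be a multiset of positive integers with sum n and cardinality ℓ ≤ k; for each positive integer j let m_j denote the multiplicity of j in λ. Let U be the set of pairs (d, c) of weakly increasing functions d, c : Fin (k-1) → Fin (n+1) with d i < c i for every i, and for (d, c) ∈ U define the column sizes γ_0,…,γ_{k-1} by γ_j = ĉ (j+1) − ĉ j, where ĉ 0 = 0, ĉ j = c (j-1) for 1 ≤ j ≤ k−1, ĉ k = n. Then (card { (d, c) ∈ U | the multiset of nonzero values among γ_0,…,γ_{k-1} equals λ }) · k · (k − ℓ)! · ∏_j (m_j !) = k! · C(n+k-2, k-1). -/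
def chat (k n : ℕ) (c : Fin (k - 1) → Fin (n + 1)) (j : ℕ) : ℕ :=
  if h0 : j = 0 then 0
  else if h : j < k then (c ⟨j - 1, by omega⟩ : ℕ)
  else n

namespace PPoly

open Finset


variable {K N : ℕ}

abbrev Cmp (K N : ℕ) := Fin (K + 1) → Fin (N + 2)

def gper (f : Cmp K N) (t : ℕ) : ℕ := (f ⟨t % (K + 1), Nat.mod_lt _ (Nat.succ_pos K)⟩ : ℕ)

def S (f : Cmp K N) (j : ℕ) : ℕ := ∑ t ∈ Finset.range j, gper f t

def vsum (f : Cmp K N) : ℕ := ∑ t : Fin (K + 1), (f t : ℕ)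

lemma gper_lt (f : Cmp K N) {t : ℕ} (h : t < K + 1) : gper f t = f ⟨t, h⟩ := by
  simp [gper, Nat.mod_eq_of_lt h]

lemma gper_add_period (f : Cmp K N) (t : ℕ) : gper f (t + (K + 1)) = gper f t := by
  simp [gper, Nat.add_mod_right]

lemma S_zero (f : Cmp K N) : S f 0 = 0 := rfl

lemma S_succ (f : Cmp K N) (j : ℕ) : S f (j + 1) = S f j + gper f j :=
  Finset.sum_range_succ _ _

lemma S_top (f : Cmp K N) : S f (K + 1) = vsum f := by
  have h1 : ∑ t : Fin (K + 1), gper f (t : ℕ) = ∑ t ∈ Finset.range (K + 1), gper f t :=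
    Fin.sum_univ_eq_sum_range _ _
  rw [S, ← h1, vsum]
  refine Finset.sum_congr rfl fun t _ => ?_
  rw [gper_lt f t.isLt]

lemma S_mono (f : Cmp K N) {i j : ℕ} (h : i ≤ j) : S f i ≤ S f j :=
  Finset.sum_le_sum_of_subset (Finset.range_subset_range.2 h)

lemma S_add (f : Cmp K N) (s i : ℕ) :
    S f (s + i) = S f s + ∑ t ∈ Finset.range i, gper f (s + t) := by
  induction i with
  | zero => simp
  | succ i ih =>
      rw [← Nat.add_assoc, S_succ, ih, Finset.sum_range_succ]
      omega

lemma S_period (f : Cmp K N) (j : ℕ) : S f (j + (K + 1)) = S f j + vsum f := by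
  induction j with
  | zero => rw [Nat.zero_add, S_top, S_zero, Nat.zero_add]
  | succ j ih =>
      have : j + 1 + (K + 1) = j + (K + 1) + 1 := by omega
      rw [this, S_succ, ih, gper_add_period, S_succ]
      omega

def rot (s : ℕ) (f : Cmp K N) : Cmp K N :=
  fun j => f (j + ⟨s % (K + 1), Nat.mod_lt _ (Nat.succ_pos K)⟩)

lemma gper_rot (s : ℕ) (f : Cmp K N) (t : ℕ) : gper (rot s f) t = gper f (t + s) := by
  have harg : ((⟨t % (K + 1), Nat.mod_lt _ (Nat.succ_pos K)⟩ : Fin (K + 1)) +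
      ⟨s % (K + 1), Nat.mod_lt _ (Nat.succ_pos K)⟩)
      = (⟨(t + s) % (K + 1), Nat.mod_lt _ (Nat.succ_pos K)⟩ : Fin (K + 1)) := by
    ext
    rw [Fin.val_add]
    exact (Nat.add_mod t s (K + 1)).symm
  show (rot s f ⟨t % (K + 1), Nat.mod_lt _ (Nat.succ_pos K)⟩ : ℕ) = _
  rw [rot, harg]
  rfl

lemma S_rot (s : ℕ) (f : Cmp K N) (i : ℕ) : S f (s + i) = S f s + S (rot s f) i := by
  rw [S_add]
  congr 1
  refine Finset.sum_congr rfl fun t _ => ?_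
  rw [gper_rot, Nat.add_comm t s]

lemma vsum_rot (s : ℕ) (f : Cmp K N) : vsum (rot s f) = vsum f := by
  have h1 := S_rot s f (K + 1)
  rw [S_period, S_top] at h1
  omega

lemma rot_rot (s t : ℕ) (f : Cmp K N) (j : Fin (K + 1)) :
    rot s (rot t f) j = f (j + (⟨s % (K + 1), Nat.mod_lt _ (Nat.succ_pos K)⟩ +
      ⟨t % (K + 1), Nat.mod_lt _ (Nat.succ_pos K)⟩)) := by
  simp [rot, add_assoc]

lemma rot_rotInv (s : ℕ) (f : Cmp K N) : rot s (rot (K + 1 - s % (K + 1)) f) = f := by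
  funext j
  rw [rot_rot]
  have h : (⟨s % (K + 1), Nat.mod_lt _ (Nat.succ_pos K)⟩ +
      ⟨(K + 1 - s % (K + 1)) % (K + 1), Nat.mod_lt _ (Nat.succ_pos K)⟩ : Fin (K + 1)) = 0 := by
    have hs : s % (K + 1) < K + 1 := Nat.mod_lt _ (Nat.succ_pos K)
    ext
    simp only [Fin.val_add, Fin.val_zero]
    rcases Nat.eq_zero_or_pos (s % (K + 1)) with h0 | h0
    · simp [h0, Nat.mod_self]
    · have h1 : K + 1 - s % (K + 1) < K + 1 := by omega
      rw [Nat.mod_eq_of_lt h1]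
      have : s % (K + 1) + (K + 1 - s % (K + 1)) = K + 1 := by omega
      rw [this, Nat.mod_self]
  rw [h, add_zero]

lemma rotInv_rot (s : ℕ) (f : Cmp K N) : rot (K + 1 - s % (K + 1)) (rot s f) = f := by
  funext j
  rw [rot_rot]
  have h : (⟨(K + 1 - s % (K + 1)) % (K + 1), Nat.mod_lt _ (Nat.succ_pos K)⟩ +
      ⟨s % (K + 1), Nat.mod_lt _ (Nat.succ_pos K)⟩ : Fin (K + 1)) = 0 := by
    have hs : s % (K + 1) < K + 1 := Nat.mod_lt _ (Nat.succ_pos K)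
    ext
    simp only [Fin.val_add, Fin.val_zero]
    rcases Nat.eq_zero_or_pos (s % (K + 1)) with h0 | h0
    · simp [h0, Nat.mod_self]
    · have h1 : K + 1 - s % (K + 1) < K + 1 := by omega
      rw [Nat.mod_eq_of_lt h1]
      have : K + 1 - s % (K + 1) + s % (K + 1) = K + 1 := by omega
      rw [this, Nat.mod_self]
  rw [h, add_zero]

lemma univ_val_map_addRight (c : Fin (K + 1)) :
    Multiset.map (fun j => j + c) (Finset.univ.val : Multiset (Fin (K + 1)))
      = Finset.univ.val := by
  have h3 := congrArg Finset.val (Finset.map_univ_equiv (Equiv.addRight c))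
  rw [Finset.map_val] at h3
  simpa using h3

lemma valmap_rot (s : ℕ) (f : Cmp K N) :
    Multiset.map (fun j => (rot s f j : ℕ)) Finset.univ.val
      = Multiset.map (fun j => (f j : ℕ)) Finset.univ.val := by
  rw [show (fun j => ((rot s f j : ℕ))) = (fun j : Fin (K + 1) => (f j : ℕ)) ∘
    (fun j => j + (⟨s % (K + 1), Nat.mod_lt _ (Nat.succ_pos K)⟩ : Fin (K + 1))) from rfl,
    ← Multiset.map_map, univ_val_map_addRight]


-- chat lemmas (k = K+1, n = N+1; c : Fin K → Fin (N+2))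
lemma chat_zero (c : Fin K → Fin (N + 2)) : chat (K + 1) (N + 1) c 0 = 0 := by
  simp [chat]

lemma chat_mid (c : Fin K → Fin (N + 2)) {j : ℕ} (h0 : 0 < j) (h : j < K + 1) :
    chat (K + 1) (N + 1) c j = (c ⟨j - 1, by omega⟩ : ℕ) := by
  rw [chat, dif_neg (by omega), dif_pos h]

lemma chat_top (c : Fin K → Fin (N + 2)) {j : ℕ} (h : K + 1 ≤ j) :
    chat (K + 1) (N + 1) c j = N + 1 := by
  rw [chat, dif_neg (by omega), dif_neg (by omega)]

lemma chat_le (c : Fin K → Fin (N + 2)) (j : ℕ) : chat (K + 1) (N + 1) c j ≤ N + 1 := by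
  rw [chat]
  split
  · omega
  split
  · exact Fin.is_le _
  · omega

lemma chat_step (c : Fin K → Fin (N + 2)) (hc : Monotone c) (j : ℕ) :
    chat (K + 1) (N + 1) c j ≤ chat (K + 1) (N + 1) c (j + 1) := by
  rcases Nat.eq_zero_or_pos j with h0 | h0
  · subst h0; rw [chat_zero]; omega
  rcases Nat.lt_or_ge (j + 1) (K + 1) with h1 | h1
  · rw [chat_mid c h0 (by omega), chat_mid c (by omega) h1]
    exact hc (Fin.mk_le_mk.2 (by omega))
  · rw [chat_top c h1]
    exact chat_le c j

def gamOf (c : Fin K → Fin (N + 2)) : Cmp K N :=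
  fun j => ⟨chat (K + 1) (N + 1) c ((j : ℕ) + 1) - chat (K + 1) (N + 1) c (j : ℕ), by
    have := chat_le c ((j : ℕ) + 1); omega⟩

lemma S_gamOf (c : Fin K → Fin (N + 2)) (hc : Monotone c) :
    ∀ j, j ≤ K + 1 → S (gamOf c) j = chat (K + 1) (N + 1) c j := by
  intro j
  induction j with
  | zero => intro _; rw [S_zero, chat_zero]
  | succ j ih =>
      intro hj
      rw [S_succ, ih (by omega), gper_lt _ (by omega : j < K + 1)]
      have hstep := chat_step c hc j
      show chat (K + 1) (N + 1) c j + (chat (K + 1) (N + 1) c (j + 1) -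
        chat (K + 1) (N + 1) c j) = _
      omega

lemma vsum_gamOf (c : Fin K → Fin (N + 2)) (hc : Monotone c) : vsum (gamOf c) = N + 1 := by
  rw [← S_top, S_gamOf c hc (K + 1) le_rfl, chat_top c le_rfl]

def cOf (γ : Cmp K N) : Fin K → Fin (N + 2) :=
  fun i => ⟨min (S γ ((i : ℕ) + 1)) (N + 1), by omega⟩

lemma cOf_val (γ : Cmp K N) (hγ : vsum γ = N + 1) (i : Fin K) :
    (cOf γ i : ℕ) = S γ ((i : ℕ) + 1) := by
  have h1 : S γ ((i : ℕ) + 1) ≤ N + 1 := by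
    rw [← hγ, ← S_top]
    exact S_mono γ (by omega)
  simp [cOf, h1]

lemma cOf_mono (γ : Cmp K N) : Monotone (cOf γ) := by
  intro i j hij
  have hij' : (i : ℕ) ≤ (j : ℕ) := hij
  simp only [cOf, Fin.mk_le_mk]
  exact min_le_min (S_mono γ (by omega)) le_rfl

lemma chat_cOf (γ : Cmp K N) (hγ : vsum γ = N + 1) {j : ℕ} (hj : j ≤ K + 1) :
    chat (K + 1) (N + 1) (cOf γ) j = S γ j := by
  rcases Nat.eq_zero_or_pos j with h0 | h0
  · subst h0; rw [chat_zero, S_zero]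
  rcases Nat.lt_or_ge j (K + 1) with h1 | h1
  · rw [chat_mid _ h0 h1, cOf_val γ hγ]
    congr 1
    show j - 1 + 1 = j
    omega
  · have hj1 : j = K + 1 := by omega
    subst hj1
    rw [chat_top _ le_rfl, S_top, hγ]

lemma gamOf_cOf (γ : Cmp K N) (hγ : vsum γ = N + 1) : gamOf (cOf γ) = γ := by
  funext j
  ext
  show chat (K + 1) (N + 1) (cOf γ) ((j : ℕ) + 1) - chat (K + 1) (N + 1) (cOf γ) (j : ℕ)
    = (γ j : ℕ)
  rw [chat_cOf γ hγ (by omega), chat_cOf γ hγ (by omega : (j:ℕ) ≤ K + 1), S_succ,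
    gper_lt γ j.isLt]
  simp

lemma cOf_gamOf (c : Fin K → Fin (N + 2)) (hc : Monotone c) : cOf (gamOf c) = c := by
  funext i
  ext
  show min (S (gamOf c) ((i : ℕ) + 1)) (N + 1) = (c i : ℕ)
  rw [S_gamOf c hc _ (by omega), chat_mid c (by omega) (by omega)]
  have : (⟨(i : ℕ) + 1 - 1, by omega⟩ : Fin K) = i := by ext; simp
  rw [this]
  exact min_eq_left (Fin.is_le _)


lemma cycle (k : ℕ) (hk : 0 < k) (T : ℕ → ℤ) (hT : ∀ j, T (j + k) = T j + 1) :
    ∃! s, s ∈ Finset.range k ∧ ∀ i ∈ Finset.Icc 1 k, T s + 1 ≤ T (s + i) := by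
  have hne : (Finset.range k).Nonempty := ⟨0, Finset.mem_range.2 hk⟩
  obtain ⟨m, hm_mem, hm_min⟩ := Finset.exists_min_image (Finset.range k) T hne
  have hFne : ((Finset.range k).filter (fun j => T j = T m)).Nonempty := ⟨m, by simp [hm_mem]⟩
  set s := ((Finset.range k).filter (fun j => T j = T m)).max' hFne with hs
  have hs_mem' := Finset.max'_mem _ hFne
  rw [Finset.mem_filter] at hs_mem'
  have hs_lt : s < k := Finset.mem_range.1 hs_mem'.1
  have hTs : T s = T m := hs_mem'.2
  have hmin : ∀ t, t < k → T m ≤ T t := fun t ht => hm_min t (Finset.mem_range.2 ht)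
  have hmax : ∀ t, t < k → T t = T m → t ≤ s := fun t ht h' =>
    Finset.le_max' _ t (Finset.mem_filter.2 ⟨Finset.mem_range.2 ht, h'⟩)
  have hvalid : ∀ i ∈ Finset.Icc 1 k, T s + 1 ≤ T (s + i) := by
    intro i hi
    rw [Finset.mem_Icc] at hi
    rcases Nat.lt_or_ge (s + i) k with h | h
    · have h1 := hmin _ h
      have h2 : T (s + i) ≠ T m := fun he => by have := hmax _ h he; omega
      omega
    · have h3 : T (s + i) = T (s + i - k) + 1 := by
        rw [← hT]
        congr 1
        omega
      have h4 := hmin (s + i - k) (by omega)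
      omega
  have key : ∀ a b, a < k → b < k → a < b →
      (∀ i ∈ Finset.Icc 1 k, T a + 1 ≤ T (a + i)) →
      (∀ i ∈ Finset.Icc 1 k, T b + 1 ≤ T (b + i)) → False := by
    intro a b ha hb hab hva hvb
    have h1 := hva (b - a) (Finset.mem_Icc.2 (by omega))
    rw [show a + (b - a) = b by omega] at h1
    have h2 := hvb (a + k - b) (Finset.mem_Icc.2 (by omega))
    rw [show b + (a + k - b) = a + k by omega, hT a] at h2
    omega
  refine ⟨s, ⟨hs_mem'.1, hvalid⟩, ?_⟩
  rintro y ⟨hy_mem, hyv⟩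
  have hy_lt := Finset.mem_range.1 hy_mem
  rcases lt_trichotomy y s with h | h | h
  · exact absurd (key y s hy_lt hs_lt h hyv hvalid) (by simp)
  · exact h
  · exact absurd (key s y hs_lt hy_lt h hvalid hyv) (by simp)

-- Counting sets
noncomputable def Aset (γ : Cmp K N) : Finset (Cmp K N) :=
  @Finset.filter _ (fun δ =>
    vsum δ = N + 1 ∧ ∀ i ∈ Finset.Icc 1 K, S δ i + 1 ≤ S γ i)
    (fun _ => Classical.propDecidable _) Finset.univ

noncomputable def Bset (γ : Cmp K N) (s : ℕ) : Finset (Cmp K N) :=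
  @Finset.filter _ (fun δ =>
    vsum δ = N + 1 ∧ ∀ i ∈ Finset.Icc 1 K, S δ i + S γ s + 1 ≤ S γ (s + i))
    (fun _ => Classical.propDecidable _) Finset.univ

noncomputable def B2set (γ : Cmp K N) (s : ℕ) : Finset (Cmp K N) :=
  @Finset.filter _ (fun ε =>
    vsum ε = N ∧ ∀ i ∈ Finset.Icc 1 (K + 1), S ε i + S γ s + 1 ≤ S γ (s + i))
    (fun _ => Classical.propDecidable _) Finset.univ

noncomputable def B3set (γ : Cmp K N) (s : ℕ) : Finset (Cmp K N) :=
  @Finset.filter _ (fun ω =>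
    vsum ω = N ∧ ∀ i ∈ Finset.Icc 1 (K + 1), S ω (s + i) + S γ s + 1 ≤ S γ (s + i) + S ω s)
    (fun _ => Classical.propDecidable _) Finset.univ

def Oset (K N : ℕ) : Finset (Cmp K N) := Finset.univ.filter fun ω => vsum ω = N

lemma Bset_eq_Aset_rot (γ : Cmp K N) (s : ℕ) : Bset γ s = Aset (rot s γ) := by
  ext δ
  simp only [Bset, Aset, Finset.mem_filter, Finset.mem_univ, true_and]
  constructor
  · rintro ⟨h1, h2⟩
    refine ⟨h1, fun i hi => ?_⟩
    have := h2 i hi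
    have hr := S_rot s γ i
    omega
  · rintro ⟨h1, h2⟩
    refine ⟨h1, fun i hi => ?_⟩
    have := h2 i hi
    have hr := S_rot s γ i
    omega

-- decrement/increment at the last coordinate
def decl (δ : Cmp K N) : Cmp K N :=
  fun j => if j = Fin.last K then ⟨(δ j : ℕ) - 1, by omega⟩ else δ j

def incl (ε : Cmp K N) : Cmp K N :=
  fun j => if j = Fin.last K then ⟨min ((ε j : ℕ) + 1) (N + 1), by omega⟩ else ε j

lemma S_decl (δ : Cmp K N) {i : ℕ} (hi : i ≤ K) : S (decl δ) i = S δ i := by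
  refine Finset.sum_congr rfl fun t ht => ?_
  have ht' : t < K := by have := Finset.mem_range.1 ht; omega
  rw [gper_lt _ (by omega : t < K + 1), gper_lt _ (by omega : t < K + 1)]
  show ((if (⟨t, _⟩ : Fin (K + 1)) = Fin.last K then _ else δ ⟨t, _⟩) : Fin (N + 2)).val = _
  rw [if_neg (by intro hh; have := congrArg Fin.val hh; simp [Fin.last] at this; omega)]

lemma S_incl (ε : Cmp K N) {i : ℕ} (hi : i ≤ K) : S (incl ε) i = S ε i := by
  refine Finset.sum_congr rfl fun t ht => ?_
  have ht' : t < K := by have := Finset.mem_range.1 ht; omega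
  rw [gper_lt _ (by omega : t < K + 1), gper_lt _ (by omega : t < K + 1)]
  show ((if (⟨t, _⟩ : Fin (K + 1)) = Fin.last K then _ else ε ⟨t, _⟩) : Fin (N + 2)).val = _
  rw [if_neg (by intro hh; have := congrArg Fin.val hh; simp [Fin.last] at this; omega)]

lemma last_val (f : Cmp K N) : gper f K = (f (Fin.last K) : ℕ) := by
  rw [gper_lt f (by omega : K < K + 1)]
  rfl

lemma vsum_split (f : Cmp K N) : vsum f = S f K + (f (Fin.last K) : ℕ) := by
  rw [← S_top, S_succ, last_val]

lemma vsum_decl (δ : Cmp K N) (h1 : 1 ≤ (δ (Fin.last K) : ℕ)) :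
    vsum (decl δ) = vsum δ - 1 := by
  rw [vsum_split, vsum_split, S_decl δ le_rfl]
  have : (decl δ (Fin.last K) : ℕ) = (δ (Fin.last K) : ℕ) - 1 := by
    rw [decl, if_pos rfl]
  omega

lemma vsum_incl (ε : Cmp K N) (h1 : (ε (Fin.last K) : ℕ) ≤ N) :
    vsum (incl ε) = vsum ε + 1 := by
  rw [vsum_split, vsum_split, S_incl ε le_rfl]
  have : (incl ε (Fin.last K) : ℕ) = (ε (Fin.last K) : ℕ) + 1 := by
    rw [incl, if_pos rfl]
    show min ((ε (Fin.last K) : ℕ) + 1) (N + 1) = _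
    omega
  omega

lemma last_le_vsum (f : Cmp K N) : (f (Fin.last K) : ℕ) ≤ vsum f := by
  rw [vsum_split]; omega


lemma card_Bset_eq_B2set (γ : Cmp K N) (hγ : vsum γ = N + 1) (s : ℕ) :
    (Bset γ s).card = (B2set γ s).card := by
  have hlast : ∀ δ : Cmp K N, vsum δ = N + 1 →
      (∀ i ∈ Finset.Icc 1 K, S δ i + S γ s + 1 ≤ S γ (s + i)) →
      1 ≤ (δ (Fin.last K) : ℕ) := by
    intro δ h1 h2
    have h5 := vsum_split δ
    rcases Nat.eq_zero_or_pos K with hK | hK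
    · have h6 : S δ K = S δ 0 := congrArg (S δ) hK
      rw [S_zero] at h6
      omega
    · have h3 := h2 K (Finset.mem_Icc.2 ⟨hK, le_rfl⟩)
      have h4 : S γ (s + K) ≤ S γ s + (N + 1) := by
        have hp := S_period γ s
        have hm := S_mono γ (show s + K ≤ s + (K + 1) by omega)
        omega
      omega
  refine Finset.card_bij' (fun δ _ => decl δ) (fun ε _ => incl ε) ?_ ?_ ?_ ?_
  · intro δ hδ
    simp only [Bset, Finset.mem_filter, Finset.mem_univ, true_and] at hδ
    obtain ⟨h1, h2⟩ := hδ
    have hl := hlast δ h1 h2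
    simp only [B2set, Finset.mem_filter, Finset.mem_univ, true_and]
    constructor
    · rw [vsum_decl δ hl]; omega
    · intro i hi
      rw [Finset.mem_Icc] at hi
      rcases Nat.lt_or_ge i (K + 1) with h | h
      · rw [S_decl δ (by omega)]
        exact h2 i (Finset.mem_Icc.2 ⟨hi.1, by omega⟩)
      · have hi1 : i = K + 1 := by omega
        subst hi1
        rw [S_top, vsum_decl δ hl, h1]
        have hp := S_period γ s
        omega
  · intro ε hε
    simp only [B2set, Finset.mem_filter, Finset.mem_univ, true_and] at hε
    obtain ⟨h1, h2⟩ := hε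
    have hεl : (ε (Fin.last K) : ℕ) ≤ N := by
      have := last_le_vsum ε; omega
    simp only [Bset, Finset.mem_filter, Finset.mem_univ, true_and]
    constructor
    · rw [vsum_incl ε hεl, h1]
    · intro i hi
      rw [Finset.mem_Icc] at hi
      rw [S_incl ε (by omega)]
      exact h2 i (Finset.mem_Icc.2 ⟨hi.1, by omega⟩)
  · intro δ hδ
    simp only [Bset, Finset.mem_filter, Finset.mem_univ, true_and] at hδ
    obtain ⟨h1, h2⟩ := hδ
    have hl := hlast δ h1 h2
    funext j
    by_cases hj : j = Fin.last K
    · subst hj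
      have hle : (δ (Fin.last K) : ℕ) ≤ N + 1 := by omega
      simp only [incl, decl, if_pos rfl]
      ext
      show min ((δ (Fin.last K) : ℕ) - 1 + 1) (N + 1) = _
      omega
    · simp only [incl, decl, if_neg hj]
  · intro ε hε
    simp only [B2set, Finset.mem_filter, Finset.mem_univ, true_and] at hε
    obtain ⟨h1, h2⟩ := hε
    have hεl : (ε (Fin.last K) : ℕ) ≤ N := by
      have := last_le_vsum ε; omega
    funext j
    by_cases hj : j = Fin.last K
    · subst hj
      simp only [decl, incl, if_pos rfl]
      ext
      show min ((ε (Fin.last K) : ℕ) + 1) (N + 1) - 1 = _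
      omega
    · simp only [decl, incl, if_neg hj]

lemma card_B2set_eq_B3set (γ : Cmp K N) (s : ℕ) :
    (B2set γ s).card = (B3set γ s).card := by
  refine Finset.card_bij' (fun ε _ => rot (K + 1 - s % (K + 1)) ε)
    (fun ω _ => rot s ω) ?_ ?_ ?_ ?_
  · intro ε hε
    simp only [B2set, Finset.mem_filter, Finset.mem_univ, true_and] at hε
    obtain ⟨h1, h2⟩ := hε
    simp only [B3set, Finset.mem_filter, Finset.mem_univ, true_and]
    refine ⟨by rw [vsum_rot]; exact h1, fun i hi => ?_⟩
    have hr := S_rot s (rot (K + 1 - s % (K + 1)) ε) i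
    rw [rot_rotInv s ε] at hr
    have := h2 i hi
    omega
  · intro ω hω
    simp only [B3set, Finset.mem_filter, Finset.mem_univ, true_and] at hω
    obtain ⟨h1, h2⟩ := hω
    simp only [B2set, Finset.mem_filter, Finset.mem_univ, true_and]
    refine ⟨by rw [vsum_rot]; exact h1, fun i hi => ?_⟩
    have hr := S_rot s ω i
    have := h2 i hi
    omega
  · intro ε _
    exact rot_rotInv s ε
  · intro ω _
    exact rotInv_rot s ω

lemma card_sigma_B3 (γ : Cmp K N) (hγ : vsum γ = N + 1) :
    ((Finset.range (K + 1)).sigma fun s => B3set γ s).card = (Oset K N).card := by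
  have hT : ∀ ω : Cmp K N, vsum ω = N →
      ∀ j, ((S γ (j + (K + 1)) : ℤ) - S ω (j + (K + 1))) = ((S γ j : ℤ) - S ω j) + 1 := by
    intro ω hω j
    have h1 := S_period γ j
    have h2 := S_period ω j
    omega
  have hiff : ∀ (ω : Cmp K N) (s : ℕ),
      (∀ i ∈ Finset.Icc 1 (K + 1), S ω (s + i) + S γ s + 1 ≤ S γ (s + i) + S ω s) ↔
      (∀ i ∈ Finset.Icc 1 (K + 1),
        ((S γ s : ℤ) - S ω s) + 1 ≤ ((S γ (s + i) : ℤ) - S ω (s + i))) := by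
    intro ω s
    constructor <;> intro h i hi <;> have := h i hi <;> omega
  refine Finset.card_bij (fun a _ => a.2) ?_ ?_ ?_
  · rintro ⟨s, ω⟩ h
    rw [Finset.mem_sigma] at h
    have h2 := h.2
    simp only [B3set, Finset.mem_filter, Finset.mem_univ, true_and] at h2
    simp only [Oset, Finset.mem_filter, Finset.mem_univ, true_and]
    exact h2.1
  · rintro ⟨s1, ω1⟩ h1 ⟨s2, ω2⟩ h2 heq
    simp only at heq
    subst heq
    rw [Finset.mem_sigma] at h1 h2
    have hb1 := h1.2
    have hb2 := h2.2
    simp only [B3set, Finset.mem_filter, Finset.mem_univ, true_and] at hb1 hb2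
    obtain ⟨hv, hc1⟩ := hb1
    obtain ⟨-, hc2⟩ := hb2
    obtain ⟨s0, -, huniq⟩ := cycle (K + 1) (Nat.succ_pos K)
      (fun j => (S γ j : ℤ) - S ω1 j) (hT ω1 hv)
    have e1 : s1 = s0 := huniq s1 ⟨h1.1, ((hiff ω1 s1).1 hc1)⟩
    have e2 : s2 = s0 := huniq s2 ⟨h2.1, ((hiff ω1 s2).1 hc2)⟩
    subst e1
    rw [e2]
  · intro ω hω
    simp only [Oset, Finset.mem_filter, Finset.mem_univ, true_and] at hω
    obtain ⟨s0, ⟨hmem, hvalid⟩, -⟩ := cycle (K + 1) (Nat.succ_pos K)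
      (fun j => (S γ j : ℤ) - S ω j) (hT ω hω)
    refine ⟨⟨s0, ω⟩, ?_, rfl⟩
    rw [Finset.mem_sigma]
    refine ⟨hmem, ?_⟩
    simp only [B3set, Finset.mem_filter, Finset.mem_univ, true_and]
    exact ⟨hω, (hiff ω s0).2 hvalid⟩

lemma sum_card_Bset (γ : Cmp K N) (hγ : vsum γ = N + 1) :
    ∑ s ∈ Finset.range (K + 1), (Bset γ s).card = (Oset K N).card := by
  calc ∑ s ∈ Finset.range (K + 1), (Bset γ s).card
      = ∑ s ∈ Finset.range (K + 1), (B3set γ s).card := by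
        refine Finset.sum_congr rfl fun s _ => ?_
        rw [card_Bset_eq_B2set γ hγ s, card_B2set_eq_B3set γ s]
    _ = ((Finset.range (K + 1)).sigma fun s => B3set γ s).card :=
        (Finset.card_sigma _ _).symm
    _ = (Oset K N).card := card_sigma_B3 γ hγ

def symEquiv (K N : ℕ) : {ω : Cmp K N // vsum ω = N} ≃ Sym (Fin (K + 1)) N := by
  have hcount : ∀ (f : Cmp K N) (a : Fin (K + 1)),
      Multiset.count a (Finset.univ.val.bind fun i => Multiset.replicate (f i : ℕ) i)
        = (f a : ℕ) := by
    intro f a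
    rw [Multiset.count_bind]
    have h : Multiset.map (fun b => Multiset.count a (Multiset.replicate (f b : ℕ) b))
        Finset.univ.val
        = Multiset.map (fun b => if b = a then (f b : ℕ) else 0) Finset.univ.val :=
      Multiset.map_congr rfl (fun x _ => by rw [Multiset.count_replicate])
    rw [h]
    show (∑ b : Fin (K + 1), if b = a then (f b : ℕ) else 0) = (f a : ℕ)
    simp
  exact {
    toFun := fun ω => ⟨Finset.univ.val.bind fun i => Multiset.replicate (ω.1 i : ℕ) i, by
      rw [Multiset.card_bind]
      have h : (Multiset.map (Multiset.card ∘ fun i => Multiset.replicate ((ω.1) i : ℕ) i)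
          Finset.univ.val) = Multiset.map (fun i => ((ω.1) i : ℕ)) Finset.univ.val :=
        Multiset.map_congr rfl (fun x _ => by simp)
      rw [h]
      exact ω.2⟩
    invFun := fun s => ⟨fun i => ⟨Multiset.count i s.1, by
        have h := Multiset.count_le_card i s.1
        rw [s.2] at h
        omega⟩, by
      show (∑ i : Fin (K + 1), Multiset.count i s.1) = N
      calc (∑ i : Fin (K + 1), Multiset.count i s.1)
          = ∑ i ∈ s.1.toFinset, Multiset.count i s.1 :=
            (Finset.sum_subset (Finset.subset_univ s.1.toFinset) fun x _ hx =>
              Multiset.count_eq_zero_of_notMem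
                (fun hmem => hx (Multiset.mem_toFinset.2 hmem))).symm
        _ = Multiset.card s.1 := Multiset.toFinset_sum_count_eq s.1
        _ = N := s.2⟩
    left_inv := fun ω => by
      apply Subtype.ext
      funext i
      apply Fin.ext
      exact hcount ω.1 i
    right_inv := fun s => by
      apply Subtype.ext
      rw [Multiset.ext]
      intro a
      exact hcount _ a }

lemma card_Oset : (Oset K N).card = (N + K).choose K := by
  have h1 : (Oset K N).card = Fintype.card {ω : Cmp K N // vsum ω = N} :=
    (Fintype.card_subtype _).symm
  rw [h1, Fintype.card_congr (symEquiv K N), Sym.card_sym_eq_multichoose,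
    Nat.multichoose_eq, Fintype.card_fin]
  have h2 : K + 1 + N - 1 = N + K := by omega
  rw [h2]
  have h3 := Nat.choose_symm (show N ≤ N + K by omega)
  rw [Nat.add_sub_cancel_left] at h3
  exact h3.symm


lemma prod_count_erase {β : Type*} [DecidableEq β] (μ : Multiset β) {x : β} (hx : x ∈ μ) :
    ∏ y ∈ μ.toFinset, (μ.count y).factorial
      = (∏ y ∈ (μ.erase x).toFinset, ((μ.erase x).count y).factorial) * μ.count x := by
  have hsub : (μ.erase x).toFinset ⊆ μ.toFinset :=
    Multiset.toFinset_subset.2 (Multiset.erase_subset x μ)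
  have h1 : ∏ y ∈ (μ.erase x).toFinset, ((μ.erase x).count y).factorial
      = ∏ y ∈ μ.toFinset, ((μ.erase x).count y).factorial :=
    Finset.prod_subset hsub (fun y _ hy => by
      rw [Multiset.count_eq_zero_of_notMem (fun hm => hy (Multiset.mem_toFinset.2 hm))]
      rfl)
  have hxF : x ∈ μ.toFinset := Multiset.mem_toFinset.2 hx
  have hcx : (μ.erase x).count x = μ.count x - 1 := Multiset.count_erase_self x μ
  have hrest : ∏ y ∈ μ.toFinset.erase x, ((μ.erase x).count y).factorial
      = ∏ y ∈ μ.toFinset.erase x, (μ.count y).factorial :=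
    Finset.prod_congr rfl (fun y hy => by
      rw [Multiset.count_erase_of_ne (Finset.ne_of_mem_erase hy) μ])
  have hc1 : 1 ≤ μ.count x := Multiset.one_le_count_iff_mem.2 hx
  obtain ⟨c, hc⟩ : ∃ c, μ.count x = c + 1 := ⟨μ.count x - 1, by omega⟩
  rw [h1, ← Finset.mul_prod_erase μ.toFinset _ hxF,
    ← Finset.mul_prod_erase μ.toFinset (fun y => ((μ.erase x).count y).factorial) hxF,
    hrest, hcx, hc]
  simp only [Nat.add_sub_cancel, Nat.factorial_succ]
  ring

lemma count_funs {β : Type*} [DecidableEq β] [Fintype β] :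
    ∀ (k : ℕ) (μ : Multiset β), Multiset.card μ = k →
      ((Finset.univ : Finset (Fin k → β)).filter
        fun f => Multiset.map f Finset.univ.val = μ).card *
        ∏ y ∈ μ.toFinset, (μ.count y).factorial = k.factorial := by
  intro k
  induction k with
  | zero =>
      intro μ hμ
      have hμ0 : μ = 0 := Multiset.card_eq_zero.1 hμ
      subst hμ0
      have hall : ∀ f : Fin 0 → β, Multiset.map f Finset.univ.val = 0 := by
        intro f
        simp [Finset.univ_eq_empty]
      rw [Finset.filter_true_of_mem (fun f _ => hall f), Finset.card_univ]
      simp [Fintype.card_fun]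
  | succ k ih =>
      intro μ hμ
      have hsplit : ∀ f : Fin (k + 1) → β,
          Multiset.map f Finset.univ.val
            = f (Fin.last k) ::ₘ Multiset.map (f ∘ Fin.castSucc) Finset.univ.val := by
        intro f
        conv_lhs => rw [Fin.univ_castSuccEmb]
        rw [Finset.cons_val, Multiset.map_cons, Finset.map_val, Multiset.map_map]
        rfl
      have hmemlast : ∀ f : Fin (k + 1) → β, Multiset.map f Finset.univ.val = μ →
          f (Fin.last k) ∈ μ := by
        intro f hf
        rw [← hf]
        exact Multiset.mem_map_of_mem f (by simp)
      have hfib : ((Finset.univ : Finset (Fin (k + 1) → β)).filter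
          (fun f => Multiset.map f Finset.univ.val = μ)).card
          = ∑ x ∈ μ.toFinset, (((Finset.univ : Finset (Fin k → β)).filter
              fun g => Multiset.map g Finset.univ.val = μ.erase x).card) := by
        rw [Finset.card_eq_sum_card_fiberwise
          (f := fun f : Fin (k + 1) → β => f (Fin.last k)) (t := μ.toFinset)
          (fun f hf => Multiset.mem_toFinset.2 (hmemlast f (Finset.mem_filter.1 hf).2))]
        refine Finset.sum_congr rfl fun x hx => ?_
        have hxμ : x ∈ μ := Multiset.mem_toFinset.1 hx
        refine Finset.card_bij' (fun f _ => f ∘ Fin.castSucc) (fun g _ => Fin.snoc g x)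
          ?_ ?_ ?_ ?_
        · intro f hf
          simp only [Finset.mem_filter, Finset.mem_univ, true_and] at hf ⊢
          obtain ⟨hf1, hf2⟩ := hf
          rw [hsplit, hf2] at hf1
          rw [← hf1, Multiset.erase_cons_head]
        · intro g hg
          simp only [Finset.mem_filter, Finset.mem_univ, true_and] at hg ⊢
          constructor
          · rw [hsplit]
            have h2 : (Fin.snoc g x : Fin (k + 1) → β) ∘ Fin.castSucc = g := by
              funext i
              simp [Fin.snoc_castSucc]
            rw [h2, hg]
            have h1 : (Fin.snoc g x : Fin (k + 1) → β) (Fin.last k) = x := by simp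
            rw [h1]
            exact Multiset.cons_erase hxμ
          · simp
        · intro f hf
          simp only [Finset.mem_filter, Finset.mem_univ, true_and] at hf
          have h := Fin.snoc_init_self f
          rw [hf.2] at h
          exact h
        · intro g hg
          funext i
          simp [Fin.snoc_castSucc]
      rw [hfib, Finset.sum_mul]
      have hterm : ∀ x ∈ μ.toFinset,
          ((Finset.univ : Finset (Fin k → β)).filter
            (fun g => Multiset.map g Finset.univ.val = μ.erase x)).card *
            ∏ y ∈ μ.toFinset, (μ.count y).factorial = k.factorial * μ.count x := by
        intro x hx
        have hxμ := Multiset.mem_toFinset.1 hx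
        rw [prod_count_erase μ hxμ, ← mul_assoc,
          ih (μ.erase x) (by rw [Multiset.card_erase_of_mem hxμ, hμ]; rfl)]
      rw [Finset.sum_congr rfl hterm, ← Finset.mul_sum, Multiset.toFinset_sum_count_eq, hμ,
        Nat.factorial_succ]
      ring

def Gset (K N : ℕ) (lam : Multiset ℕ) : Finset (Cmp K N) :=
  Finset.univ.filter fun γ =>
    (Multiset.map (fun j => (γ j : ℕ)) Finset.univ.val).filter (fun x => x ≠ 0) = lam

lemma vsum_of_mem_Gset {lam : Multiset ℕ} (hsum : lam.sum = N + 1) {γ : Cmp K N}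
    (hγ : γ ∈ Gset K N lam) : vsum γ = N + 1 := by
  simp only [Gset, Finset.mem_filter, Finset.mem_univ, true_and] at hγ
  have h1 := Multiset.filter_add_not (fun x => x ≠ 0)
    (Multiset.map (fun j => (γ j : ℕ)) Finset.univ.val)
  have h2 : vsum γ = (Multiset.map (fun j => (γ j : ℕ)) Finset.univ.val).sum := rfl
  have h3 : ((Multiset.map (fun j => (γ j : ℕ)) Finset.univ.val).filter
      (fun x => ¬ x ≠ 0)).sum = 0 :=
    Multiset.sum_eq_zero (fun x hx => by
      have := (Multiset.mem_filter.1 hx).2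
      omega)
  have h4 := congrArg Multiset.sum h1
  rw [Multiset.sum_add, hγ, h3, hsum, add_zero] at h4
  rw [h2, ← h4]

lemma valmap_range (f : ℕ → ℕ) :
    Multiset.map f (Finset.range (K + 1)).val
      = Multiset.map (fun j : Fin (K + 1) => f (j : ℕ)) Finset.univ.val := by
  have h : Finset.range (K + 1)
      = Finset.map Fin.valEmbedding (Finset.univ : Finset (Fin (K + 1))) := by
    rw [Fin.map_valEmbedding_univ]
    exact (Nat.Iio_eq_range (K + 1)).symm
  rw [h, Finset.map_val, Multiset.map_map]
  rfl

lemma range_to_univ (c : Fin K → Fin (N + 2)) :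
    ((Finset.range (K + 1)).val.map fun j =>
      chat (K + 1) (N + 1) c (j + 1) - chat (K + 1) (N + 1) c j)
      = Multiset.map (fun j => (gamOf c j : ℕ)) Finset.univ.val := by
  rw [valmap_range (fun j => chat (K + 1) (N + 1) c (j + 1) - chat (K + 1) (N + 1) c j)]
  rfl

lemma stepA (K N : ℕ) (lam : Multiset ℕ) (hsum : lam.sum = N + 1)
    {P : (Fin K → Fin (N + 2)) × (Fin K → Fin (N + 2)) → Prop}
    (hP : ∀ p, P p ↔ ((Monotone p.1 ∧ Monotone p.2 ∧ ∀ i, p.1 i < p.2 i) ∧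
      (((Finset.range (K + 1)).val.map fun j => chat (K + 1) (N + 1) p.2 (j + 1) -
        chat (K + 1) (N + 1) p.2 j).filter fun x => x ≠ 0) = lam))
    [inst : DecidablePred P] :
    (Finset.univ.filter P).card = ∑ γ ∈ Gset K N lam, (Aset γ).card := by
  have hmaps : ∀ p ∈ Finset.univ.filter P, gamOf p.2 ∈ Gset K N lam := by
    intro p hp
    have hPp := (hP p).1 (Finset.mem_filter.1 hp).2
    simp only [Gset, Finset.mem_filter, Finset.mem_univ, true_and]
    rw [← range_to_univ]
    exact hPp.2
  rw [Finset.card_eq_sum_card_fiberwise hmaps]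
  refine Finset.sum_congr rfl fun γ hγ => ?_
  have hvγ : vsum γ = N + 1 := vsum_of_mem_Gset hsum hγ
  refine Finset.card_bij' (fun p _ => gamOf p.1) (fun δ _ => (cOf δ, cOf γ)) ?_ ?_ ?_ ?_
  · intro p hp
    rw [Finset.mem_filter] at hp
    obtain ⟨hp1, hfib⟩ := hp
    have hPp := (hP p).1 (Finset.mem_filter.1 hp1).2
    obtain ⟨⟨hm1, hm2, hlt⟩, hmc⟩ := hPp
    simp only [Aset, Finset.mem_filter, Finset.mem_univ, true_and]
    refine ⟨vsum_gamOf p.1 hm1, fun i hi => ?_⟩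
    rw [Finset.mem_Icc] at hi
    rw [S_gamOf p.1 hm1 i (by omega), ← hfib, S_gamOf p.2 hm2 i (by omega),
      chat_mid p.1 (by omega) (by omega), chat_mid p.2 (by omega) (by omega)]
    exact hlt ⟨i - 1, by omega⟩
  · intro δ hδ
    simp only [Aset, Finset.mem_filter, Finset.mem_univ, true_and] at hδ
    obtain ⟨hvδ, hcond⟩ := hδ
    rw [Finset.mem_filter, Finset.mem_filter]
    have hfib : gamOf (cOf γ) = γ := gamOf_cOf γ hvγ
    refine ⟨⟨Finset.mem_univ _, ?_⟩, hfib⟩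
    rw [hP]
    refine ⟨⟨cOf_mono δ, cOf_mono γ, fun i => ?_⟩, ?_⟩
    · have h1 := cOf_val δ hvδ i
      have h2 := cOf_val γ hvγ i
      have h3 := hcond ((i : ℕ) + 1) (Finset.mem_Icc.2 ⟨by omega, by omega⟩)
      show ((cOf δ i : ℕ)) < ((cOf γ i : ℕ))
      omega
    · rw [range_to_univ (cOf γ), hfib]
      simp only [Gset, Finset.mem_filter, Finset.mem_univ, true_and] at hγ
      exact hγ
  · intro p hp
    rw [Finset.mem_filter] at hp
    obtain ⟨hp1, hfib⟩ := hp
    have hPp := (hP p).1 (Finset.mem_filter.1 hp1).2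
    obtain ⟨⟨hm1, hm2, hlt⟩, hmc⟩ := hPp
    have e1 : cOf (gamOf p.1) = p.1 := cOf_gamOf p.1 hm1
    have e2 : cOf γ = p.2 := by rw [← hfib]; exact cOf_gamOf p.2 hm2
    exact Prod.ext e1 e2
  · intro δ hδ
    simp only [Aset, Finset.mem_filter, Finset.mem_univ, true_and] at hδ
    exact gamOf_cOf δ hδ.1

lemma main (K N : ℕ) (lam : Multiset ℕ) (hpos : ∀ x ∈ lam, 0 < x)
    (hsum : lam.sum = N + 1) (hlen : Multiset.card lam ≤ K + 1)
    {P : (Fin K → Fin (N + 2)) × (Fin K → Fin (N + 2)) → Prop}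
    (hP : ∀ p, P p ↔ ((Monotone p.1 ∧ Monotone p.2 ∧ ∀ i, p.1 i < p.2 i) ∧
      (((Finset.range (K + 1)).val.map fun j => chat (K + 1) (N + 1) p.2 (j + 1) -
        chat (K + 1) (N + 1) p.2 j).filter fun x => x ≠ 0) = lam))
    [inst : DecidablePred P] :
    (Finset.univ.filter P).card * (K + 1) * (K + 1 - Multiset.card lam).factorial *
      ∏ j ∈ lam.toFinset, (lam.count j).factorial
      = (K + 1).factorial * (N + K).choose K := by
  rw [stepA K N lam hsum hP]
  -- Step B : rotation averaging
  have hB : (∑ γ ∈ Gset K N lam, (Aset γ).card) * (K + 1)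
      = (Gset K N lam).card * (Oset K N).card := by
    have hrotG : ∀ (s : ℕ) (γ : Cmp K N), γ ∈ Gset K N lam ↔ rot s γ ∈ Gset K N lam := by
      intro s γ
      simp only [Gset, Finset.mem_filter, Finset.mem_univ, true_and, valmap_rot]
    calc (∑ γ ∈ Gset K N lam, (Aset γ).card) * (K + 1)
        = ∑ s ∈ Finset.range (K + 1), ∑ γ ∈ Gset K N lam, (Aset γ).card := by
          rw [Finset.sum_const, Finset.card_range, smul_eq_mul, mul_comm]
      _ = ∑ s ∈ Finset.range (K + 1), ∑ γ ∈ Gset K N lam, (Aset (rot s γ)).card := by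
          refine Finset.sum_congr rfl fun s _ => ?_
          refine Finset.sum_bij' (fun γ _ => rot (K + 1 - s % (K + 1)) γ)
            (fun γ _ => rot s γ) ?_ ?_ ?_ ?_ ?_
          · intro γ hγ
            exact (hrotG _ γ).1 hγ
          · intro γ hγ
            exact (hrotG _ γ).1 hγ
          · intro γ _
            exact rot_rotInv s γ
          · intro γ _
            exact rotInv_rot s γ
          · intro γ _
            rw [rot_rotInv s γ]
      _ = ∑ γ ∈ Gset K N lam, ∑ s ∈ Finset.range (K + 1), (Bset γ s).card := by
          rw [Finset.sum_comm]
          refine Finset.sum_congr rfl fun s _ => Finset.sum_congr rfl fun γ _ => ?_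
          rw [Bset_eq_Aset_rot]
      _ = ∑ γ ∈ Gset K N lam, (Oset K N).card := by
          refine Finset.sum_congr rfl fun γ hγ => ?_
          exact sum_card_Bset γ (vsum_of_mem_Gset hsum hγ)
      _ = (Gset K N lam).card * (Oset K N).card := by
          rw [Finset.sum_const, smul_eq_mul]
  -- Step D : multinomial count of Gset
  have hle : ∀ x ∈ lam, x ≤ N + 1 := fun x hx => by
    have h := Multiset.single_le_sum (fun y _ => Nat.zero_le y) x hx
    omega
  set lam' : Multiset (Fin (N + 2)) :=
    lam.attach.map (fun x => (⟨x.1, by have := hle x.1 x.2; omega⟩ : Fin (N + 2))) with hlam'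
  have hlam'c : Multiset.map (fun y : Fin (N + 2) => (y : ℕ)) lam' = lam := by
    rw [hlam', Multiset.map_map]
    refine (Multiset.map_congr rfl fun x _ => rfl).trans ?_
    refine (Multiset.attach_map_val' lam (fun x => x)).trans ?_
    exact Multiset.map_id' lam
  have hcard_lam' : Multiset.card lam' = Multiset.card lam := by
    rw [hlam']; simp
  set μ' := lam' + Multiset.replicate (K + 1 - Multiset.card lam) 0 with hμ'
  have hcardμ' : Multiset.card μ' = K + 1 := by
    rw [hμ', Multiset.card_add, Multiset.card_replicate, hcard_lam']
    omega
  have hμ'c : Multiset.map (fun y : Fin (N + 2) => (y : ℕ)) μ'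
      = lam + Multiset.replicate (K + 1 - Multiset.card lam) 0 := by
    rw [hμ', Multiset.map_add, hlam'c, Multiset.map_replicate]
    rfl
  have hGeq : Gset K N lam
      = Finset.univ.filter (fun γ : Cmp K N => Multiset.map γ Finset.univ.val = μ') := by
    ext γ
    simp only [Gset, Finset.mem_filter, Finset.mem_univ, true_and]
    have hcomp : (fun j : Fin (K + 1) => (γ j : ℕ))
        = (fun y : Fin (N + 2) => (y : ℕ)) ∘ γ := rfl
    constructor
    · intro h
      apply Multiset.map_injective (Fin.val_injective)
      rw [Multiset.map_map]
      have h1 := Multiset.filter_add_not (fun x => x ≠ 0)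
        (Multiset.map (fun j => (γ j : ℕ)) Finset.univ.val)
      have h2 : (Multiset.map (fun j => (γ j : ℕ)) Finset.univ.val).filter
          (fun x => ¬ x ≠ 0) = Multiset.replicate (K + 1 - Multiset.card lam) 0 := by
        rw [Multiset.eq_replicate]
        constructor
        · have hc := congrArg Multiset.card h1
          rw [Multiset.card_add, h] at hc
          have hM : Multiset.card (Multiset.map (fun j => (γ j : ℕ)) Finset.univ.val)
              = K + 1 := by simp
          rw [hM] at hc
          omega
        · intro b hb
          have hb2 := (Multiset.mem_filter.1 hb).2
          exact not_not.1 hb2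
      rw [hμ'c, ← hcomp, ← h2, ← h]
      exact h1.symm
    · intro h
      have h2 : Multiset.map (fun j => (γ j : ℕ)) Finset.univ.val
          = lam + Multiset.replicate (K + 1 - Multiset.card lam) 0 := by
        rw [hcomp, ← Multiset.map_map, h, hμ'c]
      rw [h2, Multiset.filter_add]
      have hl : lam.filter (fun x => x ≠ 0) = lam :=
        Multiset.filter_eq_self.2 (fun x hx => by have := hpos x hx; omega)
      have hr : (Multiset.replicate (K + 1 - Multiset.card lam) 0).filter
          (fun x => x ≠ 0) = 0 :=
        Multiset.filter_eq_nil.2 (fun x hx => by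
          have hx0 := Multiset.eq_of_mem_replicate hx
          simp [hx0])
      rw [hl, hr, add_zero]
  have h0lam' : (0 : Fin (N + 2)) ∉ lam' := by
    rw [hlam']
    intro h
    obtain ⟨x, hx, hx2⟩ := Multiset.mem_map.1 h
    have hval := congrArg Fin.val hx2
    have := hpos x.1 x.2
    simp at hval
    omega
  have hcnt : ∀ y : Fin (N + 2), lam'.count y = lam.count (y : ℕ) := by
    intro y
    rw [← hlam'c, Multiset.count_map_eq_count' _ _ Fin.val_injective]
  have hprod' : ∏ y ∈ lam'.toFinset, (lam'.count y).factorial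
      = ∏ j ∈ lam.toFinset, (lam.count j).factorial := by
    refine Finset.prod_nbij (fun y => (y : ℕ)) ?_ ?_ ?_ ?_
    · intro y hy
      rw [Multiset.mem_toFinset] at hy ⊢
      rw [← hlam'c]
      exact Multiset.mem_map_of_mem _ hy
    · exact Fin.val_injective.injOn
    · intro j hj
      rw [Finset.mem_coe, Multiset.mem_toFinset, ← hlam'c] at hj
      obtain ⟨y, hy, hy2⟩ := Multiset.mem_map.1 hj
      exact ⟨y, Finset.mem_coe.2 (Multiset.mem_toFinset.2 hy), hy2⟩
    · intro y hy
      rw [hcnt]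
  have hQ : ∏ y ∈ μ'.toFinset, (μ'.count y).factorial
      = (K + 1 - Multiset.card lam).factorial *
        ∏ j ∈ lam.toFinset, (lam.count j).factorial := by
    by_cases hK : K + 1 - Multiset.card lam = 0
    · rw [hμ', hK, Multiset.replicate_zero, add_zero, hprod', Nat.factorial_zero, one_mul]
    · have htF : μ'.toFinset = insert 0 lam'.toFinset := by
        rw [hμ', Multiset.toFinset_add, Multiset.toFinset_replicate, if_neg hK,
          Finset.union_comm, ← Finset.insert_eq]
      have h0nF : (0 : Fin (N + 2)) ∉ lam'.toFinset := fun h =>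
        h0lam' (Multiset.mem_toFinset.1 h)
      have hc0 : μ'.count 0 = K + 1 - Multiset.card lam := by
        rw [hμ', Multiset.count_add, Multiset.count_eq_zero_of_notMem h0lam',
          Multiset.count_replicate_self, zero_add]
      have hcy : ∀ y ∈ lam'.toFinset, μ'.count y = lam'.count y := by
        intro y hy
        have hyne : y ≠ 0 := fun he => h0nF (he ▸ hy)
        rw [hμ', Multiset.count_add, Multiset.count_replicate,
          if_neg (fun he => hyne he.symm), add_zero]
      rw [htF, Finset.prod_insert h0nF, hc0,
        Finset.prod_congr rfl (fun y hy => by rw [hcy y hy]), hprod']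
  have hD : (Gset K N lam).card * ((K + 1 - Multiset.card lam).factorial *
      ∏ j ∈ lam.toFinset, (lam.count j).factorial) = (K + 1).factorial := by
    rw [← hQ, hGeq]
    exact count_funs (K + 1) μ' hcardμ'
  calc (∑ γ ∈ Gset K N lam, (Aset γ).card) * (K + 1) *
        (K + 1 - Multiset.card lam).factorial * ∏ j ∈ lam.toFinset, (lam.count j).factorial
      = ((∑ γ ∈ Gset K N lam, (Aset γ).card) * (K + 1)) *
        ((K + 1 - Multiset.card lam).factorial *
          ∏ j ∈ lam.toFinset, (lam.count j).factorial) := by ring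
    _ = ((Gset K N lam).card * (Oset K N).card) *
        ((K + 1 - Multiset.card lam).factorial *
          ∏ j ∈ lam.toFinset, (lam.count j).factorial) := by rw [hB]
    _ = ((Gset K N lam).card * ((K + 1 - Multiset.card lam).factorial *
          ∏ j ∈ lam.toFinset, (lam.count j).factorial)) * (Oset K N).card := by ring
    _ = (K + 1).factorial * (Oset K N).card := by rw [hD]
    _ = (K + 1).factorial * (N + K).choose K := by rw [card_Oset]

end PPoly

/-- The number of parallelogram polyominoes of width `k` and height `n` whose
multiset of big-step sizes (the nonzero column sizes `γ_j = ĉ(j+1) − ĉ(j)` of the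
upper path) equals a given multiset `lam` of positive integers summing to `n`
with at most `k` parts, satisfies
`card · k · (k−ℓ)! · ∏_j m_j! = k! · C(n+k-2, k-1)`. -/
theorem stmt6 (k n : ℕ) (hk : 1 ≤ k) (hn : 1 ≤ n) (lam : Multiset ℕ)
    (hpos : ∀ x ∈ lam, 0 < x) (hsum : lam.sum = n) (hlen : Multiset.card lam ≤ k) :
    Nat.card {p : (Fin (k - 1) → Fin (n + 1)) × (Fin (k - 1) → Fin (n + 1)) //
        (Monotone p.1 ∧ Monotone p.2 ∧ ∀ i, p.1 i < p.2 i) ∧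
        (((Finset.range k).val.map fun j => chat k n p.2 (j + 1) - chat k n p.2 j).filter
            fun x => x ≠ 0) = lam} * k * Nat.factorial (k - Multiset.card lam) *
        ∏ j ∈ lam.toFinset, Nat.factorial (lam.count j) =
      Nat.factorial k * Nat.choose (n + k - 2) (k - 1) := by
  obtain ⟨K, rfl⟩ : ∃ K, k = K + 1 := ⟨k - 1, by omega⟩
  obtain ⟨N, rfl⟩ : ∃ N, n = N + 1 := ⟨n - 1, by omega⟩
  classical
  rw [Nat.card_eq_fintype_card, Fintype.card_subtype]
  have h := PPoly.main K N lam hpos hsum hlen (fun p => Iff.rfl)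
  rw [show N + 1 + (K + 1) - 2 = N + K from by omega]
  exact h
end
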